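/- arXiv:1305.4971 — 5 statements merged into one kernel-verified Lean document; each statement's English description precedes it below -/
import Mathlib

section
/- Put s(τ) = (Ξ − 2ξ)/(q(1 − τ)). For every τ in the open interval ((q−2)/(q−1), 1) and every real Ω ≥ 0, one has 2^(Ω−3) ≤ Π(τ, λ(s(τ) + Ω)). -/
open scoped Classical ENNReal
open Real Set Filter

/-- The quadratic function `Q(s) = q·s²`. -/
noncomputable def Qf (q : ℤ) (s : ℝ) : ℝ := (q : ℝ) * s ^ 2

/-- The half-open interval `I_s = [2^(Q(s)), 2^(Q(s)) + Q(s+1) − Q(s) + Ξ)`. -/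
noncomputable def Iset (q Ξ : ℤ) (s : ℝ) : Set ℝ :=
  Set.Ico ((2 : ℝ) ^ (Qf q s)) ((2 : ℝ) ^ (Qf q s) + Qf q (s + 1) - Qf q s + (Ξ : ℝ))

/-- The half-open interval `J_s = [2^(Q(s)) + Q(s+1) − Q(s) + Ξ, 2^(Q(s+1)))`. -/
noncomputable def Jset (q Ξ : ℤ) (s : ℝ) : Set ℝ :=
  Set.Ico ((2 : ℝ) ^ (Qf q s) + Qf q (s + 1) - Qf q s + (Ξ : ℝ)) ((2 : ℝ) ^ (Qf q (s + 1)))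

/-- The sequence `(x_j)` in `{0,1}`: `x_j = 0` iff `j + 1 ∈ I_s` for some integer `s ≥ 0`. -/
noncomputable def xseq (q Ξ : ℤ) (j : ℕ) : ℕ :=
  if ∃ s : ℕ, ((j : ℝ) + 1) ∈ Iset q Ξ (s : ℝ) then 0 else 1

/-- `N(k) = #{ j ∈ {0,…,k−1} : x_j = 0 }`, with `N(0) = 0`. -/
noncomputable def Nf (q Ξ : ℤ) (k : ℕ) : ℕ :=
  ((Finset.range k).filter (fun j => xseq q Ξ j = 0)).card

/-- `B(0) = 0`, `B(1) = 1`, and for `k ≥ 2`,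
`B(k) = 1 + #{ j ∈ {0,…,k−2} : x_j ≠ x_{j+1} }`. -/
noncomputable def Bf (q Ξ : ℤ) (k : ℕ) : ℕ :=
  if k = 0 then 0
  else 1 + ((Finset.range (k - 1)).filter (fun j => xseq q Ξ j ≠ xseq q Ξ (j + 1))).card

/-- The length `|J_s| = 2^(Q(s+1)) − 2^(Q(s)) − (Q(s+1) − Q(s) + Ξ)` of `J_s`. -/
noncomputable def Jlen (q Ξ : ℤ) (s : ℝ) : ℝ :=
  (2 : ℝ) ^ (Qf q (s + 1)) - (2 : ℝ) ^ (Qf q s) - (Qf q (s + 1) - Qf q s + (Ξ : ℝ))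

/-- `λ(s) = 1/|J_s|`. -/
noncomputable def lamf (q Ξ : ℤ) (s : ℝ) : ℝ := 1 / Jlen q Ξ s

/-- The two-variable series `Π(τ,λ) = Σ_{k≥0} 2^(−λk − τ·N(k) + τ·ξ·B(k))`, a sum in `[0,∞]`. -/
noncomputable def Pi2 (q Ξ : ℤ) (ξ τ lam : ℝ) : ℝ≥0∞ :=
  ∑' k : ℕ, ENNReal.ofReal
    ((2 : ℝ) ^ (-lam * (k : ℝ) - τ * (Nf q Ξ k : ℝ) + τ * ξ * (Bf q Ξ k : ℝ)))


def En (p : ℕ) (t : ℕ) : ℕ := 2 ^ (p * t ^ 2)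
def Ln (q Ξ : ℤ) (t : ℕ) : ℕ := (q * (2 * t + 1) + Ξ).toNat
def Pn (q Ξ : ℤ) (p m : ℕ) : Prop := ∃ t, En p t ≤ m ∧ m < En p t + Ln q Ξ t

section auxAB
variable {Ξ q : ℤ} {p : ℕ}

lemma two_rpow_cast (hp : (p : ℤ) = q) (t : ℕ) :
    (2:ℝ) ^ (Qf q (t : ℝ)) = (En p t : ℝ) := by
  have h : Qf q (t:ℝ) = ((p * t ^ 2 : ℕ) : ℝ) := by
    simp only [Qf, ← hp]; push_cast; ring
  rw [h, Real.rpow_natCast]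
  simp [En]

lemma L1 (hq : 3 ≤ q) (hqΞ : 1 ≤ q + Ξ)
    (hpow : (q : ℝ) + 1 + (Ξ : ℝ) ≤ (2 : ℝ) ^ ((q : ℝ) - 1))
    (s : ℝ) (hs : 0 ≤ s) :
    (2:ℝ) ^ (Qf q s) + ((q:ℝ) * (2*s+1) + (Ξ:ℝ)) ≤ (1/2) * (2:ℝ) ^ (Qf q (s+1)) := by
  have hq' : (3:ℝ) ≤ (q:ℝ) := by exact_mod_cast hq
  have hqΞ' : (1:ℝ) ≤ (q:ℝ) + (Ξ:ℝ) := by exact_mod_cast hqΞ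
  have hQnn : 0 ≤ Qf q s := mul_nonneg (by linarith) (sq_nonneg s)
  have hX : (1:ℝ) ≤ (2:ℝ) ^ (Qf q s) := Real.one_le_rpow (by norm_num) hQnn
  have hsplit : (2:ℝ) ^ (Qf q (s+1)) =
      (2:ℝ) ^ (Qf q s) * ((2:ℝ) ^ ((q:ℝ)-1) * (2:ℝ) ^ (2*(q:ℝ)*s)) * 2 := by
    have h : Qf q (s+1) = Qf q s + ((q:ℝ)-1) + 2*(q:ℝ)*s + 1 := by simp only [Qf]; ring
    rw [h, Real.rpow_add two_pos, Real.rpow_add two_pos, Real.rpow_add two_pos, Real.rpow_one]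
    ring
  have hZ : 1 + (q:ℝ)*s ≤ (2:ℝ) ^ (2*(q:ℝ)*s) := by
    rw [Real.rpow_def_of_pos two_pos]
    have h1 : Real.log 2 * (2*(q:ℝ)*s) + 1 ≤ Real.exp (Real.log 2 * (2*(q:ℝ)*s)) :=
      Real.add_one_le_exp _
    have h2 : (0.6931471803 : ℝ) < Real.log 2 := Real.log_two_gt_d9
    nlinarith [mul_nonneg (mul_nonneg (by linarith : (0:ℝ) ≤ (q:ℝ)) hs)
      (by linarith : (0:ℝ) ≤ Real.log 2 - 1/2)]
  have hYpos : (0:ℝ) < (q:ℝ) + 1 + (Ξ:ℝ) := by linarith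
  have hZpos : (0:ℝ) < 1 + (q:ℝ)*s := by nlinarith
  have s1 : ((q:ℝ) + 1 + Ξ) * (1 + (q:ℝ)*s) ≤ (2:ℝ) ^ ((q:ℝ)-1) * (2:ℝ) ^ (2*(q:ℝ)*s) :=
    mul_le_mul hpow hZ (le_of_lt hZpos) (le_trans (le_of_lt hYpos) hpow)
  have s2 : (2:ℝ)^(Qf q s) * (((q:ℝ) + 1 + Ξ) * (1 + (q:ℝ)*s)) ≤
      (2:ℝ)^(Qf q s) * ((2:ℝ) ^ ((q:ℝ)-1) * (2:ℝ) ^ (2*(q:ℝ)*s)) :=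
    mul_le_mul_of_nonneg_left s1 (by linarith)
  rw [hsplit]
  nlinarith [mul_nonneg (by linarith : (0:ℝ) ≤ (2:ℝ)^(Qf q s) - 1) (by linarith : (0:ℝ) ≤ (q:ℝ) + Ξ - 1),
    mul_nonneg (mul_nonneg (by linarith : (0:ℝ) ≤ (2:ℝ)^(Qf q s) - 1) (by linarith : (0:ℝ) ≤ (q:ℝ) + Ξ + 1)) (mul_nonneg (by linarith : (0:ℝ) ≤ (q:ℝ)) hs),
    mul_nonneg (by linarith : (0:ℝ) ≤ (q:ℝ)) hs]
lemma Ln_int (hq : 3 ≤ q) (hqΞ : 1 ≤ q + Ξ) (t : ℕ) :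
    ((Ln q Ξ t : ℤ)) = q * (2 * t + 1) + Ξ := by
  have h1 : (1:ℤ) ≤ q * (2 * t + 1) + Ξ := by nlinarith [Int.ofNat_nonneg t]
  exact Int.toNat_of_nonneg (by linarith)

lemma Ln_real (hq : 3 ≤ q) (hqΞ : 1 ≤ q + Ξ) (t : ℕ) :
    ((Ln q Ξ t : ℕ) : ℝ) = (q:ℝ) * (2*(t:ℝ)+1) + (Ξ:ℝ) := by
  have h := Ln_int (Ξ := Ξ) hq hqΞ t
  have h2 : ((Ln q Ξ t : ℕ) : ℝ) = ((q * (2 * t + 1) + Ξ : ℤ) : ℝ) := by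
    exact_mod_cast congrArg (Int.cast : ℤ → ℝ) h
  rw [h2]; push_cast; ring

lemma hEL (hq : 3 ≤ q) (hqΞ : 1 ≤ q + Ξ) (hp : (p : ℤ) = q)
    (hpow : (q : ℝ) + 1 + (Ξ : ℝ) ≤ (2 : ℝ) ^ ((q : ℝ) - 1)) (t : ℕ) :
    2 * (En p t + Ln q Ξ t) ≤ En p (t+1) := by
  have h := L1 hq hqΞ hpow (t:ℝ) (Nat.cast_nonneg t)
  rw [two_rpow_cast hp t] at h
  have h2 : ((t:ℝ) + 1) = ((t+1 : ℕ) : ℝ) := by push_cast; ring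
  rw [h2, two_rpow_cast hp (t+1)] at h
  rw [← Ln_real hq hqΞ (Ξ := Ξ) t] at h
  have h3 : (2:ℝ) * ((En p t : ℝ) + (Ln q Ξ t : ℝ)) ≤ (En p (t+1) : ℝ) := by linarith
  exact_mod_cast h3

lemma Ln_pos (hq : 3 ≤ q) (hqΞ : 1 ≤ q + Ξ) (t : ℕ) : 1 ≤ Ln q Ξ t := by
  have h := Ln_int (Ξ := Ξ) hq hqΞ t
  have h1 : (1:ℤ) ≤ q * (2 * t + 1) + Ξ := by nlinarith [Int.ofNat_nonneg t]
  omega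

lemma En_pos (t : ℕ) : 1 ≤ En p t := Nat.one_le_two_pow

lemma En_mono {t u : ℕ} (h : t ≤ u) : En p t ≤ En p u :=
  Nat.pow_le_pow_right (by norm_num) (Nat.mul_le_mul_left _ (Nat.pow_le_pow_left h 2))

lemma En_strict (hp3 : 3 ≤ p) {t u : ℕ} (h : t < u) : En p t < En p u := by
  apply Nat.pow_lt_pow_right (by norm_num)
  have h2 : t^2 < u^2 := Nat.pow_lt_pow_left h (by norm_num)
  exact Nat.mul_lt_mul_of_le_of_lt (le_refl p) h2 (by omega)

lemma EtLt_lt_next (hq : 3 ≤ q) (hqΞ : 1 ≤ q + Ξ) (hp : (p : ℤ) = q)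
    (hpow : (q : ℝ) + 1 + (Ξ : ℝ) ≤ (2 : ℝ) ^ ((q : ℝ) - 1)) (t : ℕ) :
    En p t + Ln q Ξ t < En p (t+1) := by
  have h := hEL hq hqΞ hp hpow t
  have h1 := En_pos (p := p) t
  have h2 := Ln_pos hq hqΞ (Ξ := Ξ) t
  omega

lemma chainle (hq : 3 ≤ q) (hqΞ : 1 ≤ q + Ξ) (hp : (p : ℤ) = q)
    (hpow : (q : ℝ) + 1 + (Ξ : ℝ) ≤ (2 : ℝ) ^ ((q : ℝ) - 1)) {t u : ℕ} (h : t ≤ u) :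
    En p t + Ln q Ξ t ≤ En p u + Ln q Ξ u := by
  induction u with
  | zero => simp_all
  | succ v ih =>
    rcases Nat.lt_or_ge t (v+1) with h1 | h1
    · have := ih (by omega)
      have h3 := EtLt_lt_next hq hqΞ hp hpow v
      have h4 : En p v ≤ En p v + Ln q Ξ v := Nat.le_add_right _ _
      omega
    · have : t = v + 1 := by omega
      subst this; rfl

lemma chainlt (hq : 3 ≤ q) (hqΞ : 1 ≤ q + Ξ) (hp : (p : ℤ) = q) (hp3 : 3 ≤ p)
    (hpow : (q : ℝ) + 1 + (Ξ : ℝ) ≤ (2 : ℝ) ^ ((q : ℝ) - 1)) {t u : ℕ} (h : t < u) :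
    En p t + Ln q Ξ t < En p u + Ln q Ξ u := by
  have h1 := EtLt_lt_next hq hqΞ hp hpow t
  have h2 : En p (t+1) ≤ En p u := En_mono (by omega)
  have h3 := Ln_pos hq hqΞ (Ξ := Ξ) u
  omega

lemma coverage (hp3 : 3 ≤ p) {m : ℕ} (hm : 1 ≤ m) :
    ∃ t, En p t ≤ m ∧ m < En p (t+1) := by
  induction m with
  | zero => omega
  | succ m ih =>
    rcases Nat.lt_or_ge m 1 with h1 | h1
    · have : m = 0 := by omega
      subst this
      refine ⟨0, by simp [En], ?_⟩
      have h8 : (2:ℕ)^3 ≤ 2^(p*1^2) := Nat.pow_le_pow_right (by norm_num) (by omega)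
      simp only [En]
      norm_num
      omega
    · obtain ⟨t, ht1, ht2⟩ := ih h1
      rcases Nat.lt_or_ge (m+1) (En p (t+1)) with h2 | h2
      · exact ⟨t, by omega, h2⟩
      · have he : En p (t+1) = m + 1 := by omega
        have hs := En_strict (p := p) hp3 (show t+1 < t+1+1 by omega)
        exact ⟨t+1, by omega, by omega⟩

lemma xseq_eq (hq : 3 ≤ q) (hqΞ : 1 ≤ q + Ξ) (hp : (p : ℤ) = q) (j : ℕ) :
    xseq q Ξ j = if Pn q Ξ p (j+1) then 0 else 1 := by
  unfold xseq Pn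
  congr 1
  simp only [eq_iff_iff]
  apply exists_congr
  intro s
  have hup : (2 : ℝ) ^ (Qf q (s:ℝ)) + Qf q ((s:ℝ) + 1) - Qf q (s:ℝ) + (Ξ : ℝ)
      = ((En p s : ℕ) : ℝ) + ((Ln q Ξ s : ℕ) : ℝ) := by
    rw [two_rpow_cast hp s]
    have hL : ((Ln q Ξ s : ℕ) : ℝ) = (q:ℝ) * (2*(s:ℝ)+1) + (Ξ:ℝ) := by
      have h := Ln_int (Ξ := Ξ) hq hqΞ s
      have h2 : ((Ln q Ξ s : ℕ) : ℝ) = ((q * (2 * s + 1) + Ξ : ℤ) : ℝ) := by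
        exact_mod_cast congrArg (Int.cast : ℤ → ℝ) h
      rw [h2]; push_cast; ring
    rw [hL]
    simp only [Qf]; push_cast; ring
  constructor
  · rintro ⟨h1, h2⟩
    rw [two_rpow_cast hp s] at h1
    rw [hup] at h2
    constructor
    · exact_mod_cast h1.trans (le_refl _)
    · exact_mod_cast h2
  · rintro ⟨h1, h2⟩
    constructor
    · rw [two_rpow_cast hp s]; exact_mod_cast h1
    · rw [hup]; exact_mod_cast h2

lemma notP (hq : 3 ≤ q) (hqΞ : 1 ≤ q + Ξ) (hp : (p : ℤ) = q) (hp3 : 3 ≤ p)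
    (hpow : (q : ℝ) + 1 + (Ξ : ℝ) ≤ (2 : ℝ) ^ ((q : ℝ) - 1)) {t m : ℕ}
    (h1 : En p t + Ln q Ξ t ≤ m) (h2 : m < En p (t+1)) : ¬ Pn q Ξ p m := by
  rintro ⟨u, hu1, hu2⟩
  rcases Nat.lt_or_ge t u with h | h
  · have := En_mono (p := p) (show t + 1 ≤ u by omega)
    omega
  · have := chainle hq hqΞ hp hpow (show u ≤ t by omega) (Ξ := Ξ)
    omega

lemma Nf_eq (hq : 3 ≤ q) (hqΞ : 1 ≤ q + Ξ) (hp : (p : ℤ) = q) (hp3 : 3 ≤ p)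
    (hpow : (q : ℝ) + 1 + (Ξ : ℝ) ≤ (2 : ℝ) ^ ((q : ℝ) - 1)) (s₀ k : ℕ)
    (hA : En p s₀ + Ln q Ξ s₀ ≤ k) (hB : k < En p (s₀+1)) :
    Nf q Ξ k = ∑ t ∈ Finset.range (s₀+1), Ln q Ξ t := by
  unfold Nf
  have hfe : (Finset.range k).filter (fun j => xseq q Ξ j = 0)
      = (Finset.range (s₀+1)).biUnion
          (fun t => Finset.Ico (En p t - 1) (En p t + Ln q Ξ t - 1)) := by
    ext j
    simp only [Finset.mem_filter, Finset.mem_range, Finset.mem_biUnion, Finset.mem_Ico]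
    rw [xseq_eq hq hqΞ hp j]
    constructor
    · rintro ⟨hjk, hx⟩
      have hPn : Pn q Ξ p (j+1) := by by_contra h; simp [h] at hx
      obtain ⟨t, ht1, ht2⟩ := hPn
      have hE1 := En_pos (p := p) t
      have htn : t < s₀ + 1 := by
        by_contra h
        have h2 : En p (s₀+1) ≤ En p t := En_mono (by omega)
        omega
      exact ⟨t, htn, by omega, by omega⟩
    · rintro ⟨t, htn, ht1, ht2⟩
      have hE1 := En_pos (p := p) t
      have hch := chainle hq hqΞ hp hpow (show t ≤ s₀ by omega) (Ξ := Ξ)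
      have hPn : Pn q Ξ p (j+1) := ⟨t, by omega, by omega⟩
      refine ⟨by omega, by simp [hPn]⟩
  rw [hfe, Finset.card_biUnion]
  · apply Finset.sum_congr rfl
    intro t _
    rw [Nat.card_Ico]
    have := En_pos (p := p) t
    omega
  · intro t _ u _ htu
    have key : ∀ a b : ℕ, a < b → Disjoint
        (Finset.Ico (En p a - 1) (En p a + Ln q Ξ a - 1))
        (Finset.Ico (En p b - 1) (En p b + Ln q Ξ b - 1)) := by
      intro a b hab
      rw [Finset.disjoint_left]
      intro x hx1 hx2
      simp only [Finset.mem_Ico] at hx1 hx2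
      have h1 := EtLt_lt_next hq hqΞ hp hpow a
      have h2 : En p (a+1) ≤ En p b := En_mono (by omega)
      have h3 := En_pos (p := p) b
      omega
    rcases lt_or_gt_of_ne htu with h | h
    · exact key _ _ h
    · exact (key _ _ h).symm

lemma Nf_val (hq : 3 ≤ q) (hqΞ : 1 ≤ q + Ξ) (hp : (p : ℤ) = q) (hp3 : 3 ≤ p)
    (hpow : (q : ℝ) + 1 + (Ξ : ℝ) ≤ (2 : ℝ) ^ ((q : ℝ) - 1)) (s₀ k : ℕ)
    (hA : En p s₀ + Ln q Ξ s₀ ≤ k) (hB : k < En p (s₀+1)) :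
    ((Nf q Ξ k : ℤ)) = q * ((s₀:ℤ)+1)^2 + ((s₀:ℤ)+1) * Ξ := by
  rw [Nf_eq hq hqΞ hp hp3 hpow s₀ k hA hB]
  push_cast
  rw [Finset.sum_congr rfl (fun t _ => Ln_int hq hqΞ (Ξ := Ξ) t)]
  rw [Finset.sum_add_distrib, ← Finset.mul_sum]
  have hsum : ∀ n : ℕ, (∑ t ∈ Finset.range n, (2*(t:ℤ)+1)) = (n:ℤ)^2 := by
    intro n
    induction n with
    | zero => simp
    | succ m ih => rw [Finset.sum_range_succ, ih]; push_cast; ring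
  rw [hsum (s₀+1), Finset.sum_const, Finset.card_range]
  push_cast
  ring


lemma switch_iff (hq : 3 ≤ q) (hqΞ : 1 ≤ q + Ξ) (hp : (p : ℤ) = q) (hp3 : 3 ≤ p)
    (hpow : (q : ℝ) + 1 + (Ξ : ℝ) ≤ (2 : ℝ) ^ ((q : ℝ) - 1)) (j : ℕ) :
    (xseq q Ξ j ≠ xseq q Ξ (j+1)) ↔
      ((∃ t, j+2 = En p t + Ln q Ξ t) ∨ (∃ t, j+2 = En p (t+1))) := by
  rw [xseq_eq hq hqΞ hp j, xseq_eq hq hqΞ hp (j+1)]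
  have h12 : j + 1 + 1 = j + 2 := by omega
  rw [h12]
  have hiff : ((if Pn q Ξ p (j+1) then 0 else 1) ≠ (if Pn q Ξ p (j+2) then (0:ℕ) else 1)) ↔
      ¬ (Pn q Ξ p (j+1) ↔ Pn q Ξ p (j+2)) := by
    by_cases h1 : Pn q Ξ p (j+1) <;> by_cases h2 : Pn q Ξ p (j+2) <;> simp [h1, h2]
  rw [hiff]
  obtain ⟨t, ht1, ht2⟩ := coverage hp3 (show 1 ≤ j+1 by omega)
  have hnext := EtLt_lt_next hq hqΞ hp hpow (Ξ := Ξ) t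
  rcases Nat.lt_trichotomy (j+2) (En p t + Ln q Ξ t) with hc | hc | hc
  · have hP1 : Pn q Ξ p (j+1) := ⟨t, ht1, show j+1 < En p t + Ln q Ξ t by omega⟩
    have hP2 : Pn q Ξ p (j+2) := ⟨t, show En p t ≤ j+2 by omega, hc⟩
    apply iff_of_false
    · simp [hP1, hP2]
    · rintro (⟨u, hu⟩ | ⟨u, hu⟩)
      · have hnu := EtLt_lt_next hq hqΞ hp hpow (Ξ := Ξ) u
        exact notP hq hqΞ hp hp3 hpow (le_of_eq hu.symm)
          (show j+2 < En p (u+1) by omega) hP2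
      · have h5 : t < u+1 := by
          by_contra hh
          have := En_mono (p := p) (show u+1 ≤ t by omega)
          omega
        have h6 : En p (t+1) ≤ En p (u+1) := En_mono (by omega)
        omega
  · have hP1 : Pn q Ξ p (j+1) := ⟨t, ht1, show j+1 < En p t + Ln q Ξ t by omega⟩
    have hnP2 : ¬ Pn q Ξ p (j+2) :=
      notP hq hqΞ hp hp3 hpow (show En p t + Ln q Ξ t ≤ j+2 by omega)
        (show j+2 < En p (t+1) by omega)
    apply iff_of_true
    · simp [hP1, hnP2]
    · exact Or.inl ⟨t, hc⟩
  · rcases Nat.lt_trichotomy (j+2) (En p (t+1)) with hd | hd | hd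
    · have hnP1 : ¬ Pn q Ξ p (j+1) :=
        notP hq hqΞ hp hp3 hpow (show En p t + Ln q Ξ t ≤ j+1 by omega)
          (show j+1 < En p (t+1) by omega)
      have hnP2 : ¬ Pn q Ξ p (j+2) :=
        notP hq hqΞ hp hp3 hpow (show En p t + Ln q Ξ t ≤ j+2 by omega) hd
      apply iff_of_false
      · simp [hnP1, hnP2]
      · rintro (⟨u, hu⟩ | ⟨u, hu⟩)
        · rcases Nat.lt_or_ge t u with h | h
          · have h7 := En_mono (p := p) (show t+1 ≤ u by omega)
            have h8 := Ln_pos hq hqΞ (Ξ := Ξ) u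
            omega
          · have h7 := chainle hq hqΞ hp hpow (Ξ := Ξ) h
            omega
        · have h5 : u+1 < t+1 := by
            by_contra hh
            have := En_mono (p := p) (show t+1 ≤ u+1 by omega)
            omega
          have h6 := En_mono (p := p) (show u+1 ≤ t by omega)
          omega
    · have hnP1 : ¬ Pn q Ξ p (j+1) :=
        notP hq hqΞ hp hp3 hpow (show En p t + Ln q Ξ t ≤ j+1 by omega)
          (show j+1 < En p (t+1) by omega)
      have hL1 := Ln_pos hq hqΞ (Ξ := Ξ) (t+1)
      have hP2 : Pn q Ξ p (j+2) :=
        ⟨t+1, show En p (t+1) ≤ j+2 by omega, show j+2 < En p (t+1) + Ln q Ξ (t+1) by omega⟩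
      apply iff_of_true
      · simp [hnP1, hP2]
      · exact Or.inr ⟨t, hd⟩
    · omega

lemma Sw_card (hq : 3 ≤ q) (hqΞ : 1 ≤ q + Ξ) (hp : (p : ℤ) = q) (hp3 : 3 ≤ p)
    (hpow : (q : ℝ) + 1 + (Ξ : ℝ) ≤ (2 : ℝ) ^ ((q : ℝ) - 1)) (s₀ k : ℕ)
    (hA : En p s₀ + Ln q Ξ s₀ ≤ k) (hB : k < En p (s₀+1)) :
    ((Finset.range (k-1)).filter (fun j => xseq q Ξ j ≠ xseq q Ξ (j + 1))).card = 2*s₀+1 := by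
  have hk2 : 2 ≤ k := by
    have h1 := En_pos (p := p) s₀
    have h2 := Ln_pos hq hqΞ (Ξ := Ξ) s₀
    omega
  have hfe : (Finset.range (k-1)).filter (fun j => xseq q Ξ j ≠ xseq q Ξ (j + 1))
      = (Finset.range (s₀+1)).image (fun t => En p t + Ln q Ξ t - 2)
        ∪ (Finset.range s₀).image (fun t => En p (t+1) - 2) := by
    ext j
    simp only [Finset.mem_filter, Finset.mem_range, Finset.mem_union, Finset.mem_image]
    rw [switch_iff hq hqΞ hp hp3 hpow j]
    constructor
    · rintro ⟨hjk, (⟨u, hu⟩ | ⟨u, hu⟩)⟩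
      · left
        have hun : u < s₀+1 := by
          by_contra hh
          have h1 : En p (s₀+1) ≤ En p u := En_mono (by omega)
          omega
        exact ⟨u, hun, by omega⟩
      · right
        have hun : u < s₀ := by
          by_contra hh
          have h1 : En p (s₀+1) ≤ En p (u+1) := En_mono (by omega)
          omega
        exact ⟨u, hun, by omega⟩
    · rintro (⟨u, hun, hu⟩ | ⟨u, hun, hu⟩)
      · have h1 := chainle hq hqΞ hp hpow (Ξ := Ξ) (show u ≤ s₀ by omega)
        have h2 := En_pos (p := p) u
        have h3 := Ln_pos hq hqΞ (Ξ := Ξ) u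
        exact ⟨by omega, Or.inl ⟨u, by omega⟩⟩
      · have h1 : En p (u+1) ≤ En p s₀ := En_mono (by omega)
        have h2 : 1 < En p (u+1) := En_strict (p := p) hp3 (show 0 < u+1 by omega)
          |>.trans_le' (by simpa [En] using le_refl 1)
        have h3 := En_pos (p := p) s₀
        have h4 := Ln_pos hq hqΞ (Ξ := Ξ) s₀
        exact ⟨by omega, Or.inr ⟨u, by omega⟩⟩
  rw [hfe]
  have hE2 : ∀ a : ℕ, 2 ≤ En p a + Ln q Ξ a := by
    intro a
    have := En_pos (p := p) a
    have := Ln_pos hq hqΞ (Ξ := Ξ) a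
    omega
  have hE2' : ∀ a : ℕ, 2 ≤ En p (a+1) := by
    intro a
    have h := En_strict (p := p) hp3 (show 0 < a+1 by omega)
    have : En p 0 = 1 := by simp [En]
    omega
  have hdis : Disjoint ((Finset.range (s₀+1)).image (fun t => En p t + Ln q Ξ t - 2))
      ((Finset.range s₀).image (fun t => En p (t+1) - 2)) := by
    rw [Finset.disjoint_left]
    rintro x hx1 hx2
    simp only [Finset.mem_image, Finset.mem_range] at hx1 hx2
    obtain ⟨a, _, ha⟩ := hx1
    obtain ⟨b, _, hb⟩ := hx2
    have h1 := hE2 a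
    have h2 := hE2' b
    have heq : En p a + Ln q Ξ a = En p (b+1) := by omega
    rcases le_or_gt a b with h | h
    · have h3 := EtLt_lt_next hq hqΞ hp hpow (Ξ := Ξ) a
      have h4 : En p (a+1) ≤ En p (b+1) := En_mono (by omega)
      omega
    · have h4 : En p (b+1) ≤ En p a := En_mono (by omega)
      have h5 := Ln_pos hq hqΞ (Ξ := Ξ) a
      omega
  rw [Finset.card_union_of_disjoint hdis]
  rw [Finset.card_image_of_injOn, Finset.card_image_of_injOn]
  · simp only [Finset.card_range]; omega
  · intro a _ b _ hab
    by_contra hne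
    have key : ∀ x y : ℕ, x < y → ¬ (En p (x+1) - 2 = En p (y+1) - 2) := by
      intro x y hxy
      have h1 := En_strict (p := p) hp3 (show x+1 < y+1 by omega)
      have h2 := hE2' x
      omega
    rcases Nat.lt_or_ge a b with h | h
    · exact key a b h hab
    · exact key b a (by omega) hab.symm
  · intro a _ b _ hab
    by_contra hne
    have key : ∀ x y : ℕ, x < y → ¬ (En p x + Ln q Ξ x - 2 = En p y + Ln q Ξ y - 2) := by
      intro x y hxy
      have h1 := chainlt hq hqΞ hp hp3 hpow (Ξ := Ξ) hxy
      have h2 := hE2 x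
      omega
    rcases Nat.lt_or_ge a b with h | h
    · exact key a b h hab
    · exact key b a (by omega) hab.symm

lemma Bf_val (hq : 3 ≤ q) (hqΞ : 1 ≤ q + Ξ) (hp : (p : ℤ) = q) (hp3 : 3 ≤ p)
    (hpow : (q : ℝ) + 1 + (Ξ : ℝ) ≤ (2 : ℝ) ^ ((q : ℝ) - 1)) (s₀ k : ℕ)
    (hA : En p s₀ + Ln q Ξ s₀ ≤ k) (hB : k < En p (s₀+1)) :
    Bf q Ξ k = 2*(s₀+1) := by
  have hk2 : 2 ≤ k := by
    have h1 := En_pos (p := p) s₀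
    have h2 := Ln_pos hq hqΞ (Ξ := Ξ) s₀
    omega
  unfold Bf
  rw [if_neg (by omega), Sw_card hq hqΞ hp hp3 hpow s₀ k hA hB]
  omega

end auxAB

set_option maxHeartbeats 1000000 in
theorem stmt8 (Ξ q : ℤ) (hq : 3 ≤ q) (hqΞ : 1 ≤ q + Ξ)
    (hpow : (q : ℝ) + 1 + (Ξ : ℝ) ≤ (2 : ℝ) ^ ((q : ℝ) - 1))
    (ξ : ℝ) (hξ1 : 1 ≤ (Ξ : ℝ) - 2 * ξ) (hξ2 : (Ξ : ℝ) - 2 * ξ ≤ 2) :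
    ∀ τ : ℝ, ((q : ℝ) - 2) / ((q : ℝ) - 1) < τ → τ < 1 → ∀ Ω : ℝ, 0 ≤ Ω →
      ENNReal.ofReal ((2 : ℝ) ^ (Ω - 3)) ≤
        Pi2 q Ξ ξ τ (lamf q Ξ (((Ξ : ℝ) - 2 * ξ) / ((q : ℝ) * (1 - τ)) + Ω)) := by
  intro τ hτl hτu Ω hΩ
  set γ : ℝ := (Ξ:ℝ) - 2*ξ with hγdef
  have hq' : (3:ℝ) ≤ (q:ℝ) := by exact_mod_cast hq
  have h1τ : 0 < 1 - τ := by linarith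
  have hqpos : (0:ℝ) < (q:ℝ) := by linarith
  have hden : 0 < (q:ℝ)*(1-τ) := mul_pos hqpos h1τ
  set a : ℝ := γ / ((q:ℝ)*(1-τ)) with hadef
  have ha : 0 < a := div_pos (by linarith) hden
  set sstar : ℝ := a + Ω with hsdef
  have hspos : 0 < sstar := by rw [hsdef]; linarith
  set p : ℕ := q.toNat with hpdef
  have hp : (p:ℤ) = q := Int.toNat_of_nonneg (by omega)
  have hp3 : 3 ≤ p := by omega
  set s₀ : ℕ := ⌊sstar⌋₊ with hs₀def
  have hfl : (s₀:ℝ) ≤ sstar := Nat.floor_le (le_of_lt hspos)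
  have hfu : sstar < (s₀:ℝ) + 1 := Nat.lt_floor_add_one sstar
  set n : ℕ := s₀ + 1 with hndef
  set A : ℕ := En p s₀ + Ln q Ξ s₀ with hAdef
  set B : ℕ := En p n with hBdef
  have hA2 : 2 ≤ A := by
    have h1 := En_pos (p := p) s₀
    have h2 := Ln_pos hq hqΞ (Ξ := Ξ) s₀
    omega
  have hAB : 2*A ≤ B := by
    rw [hAdef, hBdef, hndef]; exact hEL hq hqΞ hp hpow s₀
  have hABlt : A < B := by omega
  have hNfk : ∀ k ∈ Finset.Ico A B, ((Nf q Ξ k : ℝ)) = (q:ℝ)*((n:ℝ))^2 + (n:ℝ)*(Ξ:ℝ) := by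
    intro k hk
    simp only [Finset.mem_Ico, hAdef, hBdef, hndef] at hk
    have h := Nf_val hq hqΞ hp hp3 hpow s₀ k hk.1 hk.2
    have h2 : ((Nf q Ξ k : ℕ) : ℝ) = ((q * ((s₀:ℤ)+1)^2 + ((s₀:ℤ)+1)*Ξ : ℤ) : ℝ) := by
      exact_mod_cast congrArg (Int.cast : ℤ → ℝ) h
    rw [h2, hndef]; push_cast; ring
  have hBfk : ∀ k ∈ Finset.Ico A B, ((Bf q Ξ k : ℝ)) = 2*(n:ℝ) := by
    intro k hk
    simp only [Finset.mem_Ico, hAdef, hBdef, hndef] at hk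
    have h := Bf_val hq hqΞ hp hp3 hpow s₀ k hk.1 hk.2
    rw [h, hndef]; push_cast; ring
  have hBcast : (B:ℝ) = (2:ℝ)^(Qf q (n:ℝ)) := by rw [hBdef]; exact (two_rpow_cast hp n).symm
  have hAcast : (A:ℝ) = (2:ℝ)^(Qf q (s₀:ℝ)) + ((q:ℝ)*(2*(s₀:ℝ)+1) + (Ξ:ℝ)) := by
    have h1 : (A:ℝ) = (En p s₀ : ℝ) + (Ln q Ξ s₀ : ℝ) := by rw [hAdef]; push_cast; ring
    rw [h1, two_rpow_cast hp s₀, Ln_real hq hqΞ s₀]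
  have hnreal : (n:ℝ) = (s₀:ℝ) + 1 := by rw [hndef]; push_cast; ring
  clear_value γ a sstar s₀ p n A B
  have hnles : (n:ℝ) ≤ sstar + 1 := by rw [hnreal]; linarith
  have hnnn : (0:ℝ) ≤ (n:ℝ) := Nat.cast_nonneg n
  -- Jlen lower bound
  have hsplitQ : Qf q (sstar+1) - Qf q sstar = (q:ℝ)*(2*sstar+1) := by
    simp only [Qf]; ring
  have h2pos : (0:ℝ) < (2:ℝ)^(Qf q (sstar+1)) := Real.rpow_pos_of_pos two_pos _
  have hJ : (1/2) * (2:ℝ)^(Qf q (sstar+1)) ≤ Jlen q Ξ sstar := by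
    have h := L1 hq hqΞ hpow sstar (le_of_lt hspos)
    unfold Jlen
    linarith [hsplitQ]
  have hJpos : 0 < Jlen q Ξ sstar := lt_of_lt_of_le (by linarith) hJ
  set lam : ℝ := lamf q Ξ sstar with hlamdef
  have hlampos : 0 < lam := by
    rw [hlamdef]; unfold lamf; exact div_pos one_pos hJpos
  clear_value lam
  have hQmono : Qf q (n:ℝ) ≤ Qf q (sstar+1) := by
    simp only [Qf]
    nlinarith [mul_nonneg (le_of_lt hqpos)
      (mul_nonneg (sub_nonneg.2 hnles) (by linarith : (0:ℝ) ≤ (n:ℝ)+(sstar+1)))]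
  have hBle : (B:ℝ) ≤ (2:ℝ)^(Qf q (sstar+1)) := by
    rw [hBcast]; exact Real.rpow_le_rpow_of_exponent_le one_le_two hQmono
  have hlamB : lam * (B:ℝ) ≤ 2 := by
    rw [hlamdef]; unfold lamf
    rw [div_mul_eq_mul_div, one_mul, div_le_iff₀ hJpos]
    linarith
  have hkey : (1-τ)*(q:ℝ)*a = γ := by
    rw [hadef]; field_simp
  have hu : a + Ω ≤ (n:ℝ) := by rw [hnreal]; rw [hsdef] at hfu; linarith
  have halg : Ω ≤ (1-τ)*(q:ℝ)*(n:ℝ)^2 - τ*γ*(n:ℝ) := by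
    obtain ⟨δ, hδ, hu2⟩ : ∃ δ, 0 ≤ δ ∧ (n:ℝ) = a + Ω + δ :=
      ⟨(n:ℝ) - (a+Ω), by linarith, by ring⟩
    have hγ2 : (0:ℝ) ≤ γ*(2-τ) - 1 := by nlinarith
    have hid : (1-τ)*(q:ℝ)*(n:ℝ)^2 - τ*γ*(n:ℝ) - Ω
        = γ*a*(1-τ) + Ω*(γ*(2-τ)-1) + γ*δ*(2-τ) + (1-τ)*(q:ℝ)*(Ω+δ)^2 := by
      rw [hu2]
      linear_combination (a + 2*(Ω+δ)) * hkey
    have e1 : (0:ℝ) ≤ γ*a*(1-τ) :=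
      mul_nonneg (mul_nonneg (by linarith) (le_of_lt ha)) (by linarith)
    have e2 : (0:ℝ) ≤ Ω*(γ*(2-τ)-1) := mul_nonneg hΩ hγ2
    have e3 : (0:ℝ) ≤ γ*δ*(2-τ) :=
      mul_nonneg (mul_nonneg (by linarith) hδ) (by linarith)
    have e4 : (0:ℝ) ≤ (1-τ)*(q:ℝ)*(Ω+δ)^2 :=
      mul_nonneg (mul_nonneg (by linarith) (le_of_lt hqpos)) (sq_nonneg _)
    linarith
  set elow : ℝ := -lam*(B:ℝ) - τ*((q:ℝ)*(n:ℝ)^2 + γ*(n:ℝ)) with helowdef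
  have hterm : ∀ k ∈ Finset.Ico A B,
      (2:ℝ)^elow ≤ (2:ℝ)^(-lam*(k:ℝ) - τ*(Nf q Ξ k:ℝ) + τ*ξ*(Bf q Ξ k:ℝ)) := by
    intro k hk
    apply Real.rpow_le_rpow_of_exponent_le one_le_two
    rw [hNfk k hk, hBfk k hk]
    have hkB : (k:ℝ) ≤ (B:ℝ) := by
      simp only [Finset.mem_Ico] at hk
      exact_mod_cast le_of_lt hk.2
    have h1 : -lam*(B:ℝ) ≤ -lam*(k:ℝ) := by nlinarith
    have h2 : -τ*((q:ℝ)*(n:ℝ)^2 + (n:ℝ)*(Ξ:ℝ)) + τ*ξ*(2*(n:ℝ))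
        = -τ*((q:ℝ)*(n:ℝ)^2 + γ*(n:ℝ)) := by rw [hγdef]; ring
    rw [helowdef]
    linarith [h2]
  have hsumconst : ((B:ℝ) - (A:ℝ)) * (2:ℝ)^elow
      ≤ ∑ k ∈ Finset.Ico A B, (2:ℝ)^(-lam*(k:ℝ) - τ*(Nf q Ξ k:ℝ) + τ*ξ*(Bf q Ξ k:ℝ)) := by
    have h := Finset.sum_le_sum hterm
    rw [Finset.sum_const, Nat.card_Ico, nsmul_eq_mul, Nat.cast_sub (le_of_lt hABlt)] at h
    exact h
  have hBA : (1/2) * (2:ℝ)^(Qf q (n:ℝ)) ≤ (B:ℝ) - (A:ℝ) := by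
    have h := L1 hq hqΞ hpow (s₀:ℝ) (Nat.cast_nonneg s₀)
    have hQn : Qf q ((s₀:ℝ)+1) = Qf q (n:ℝ) := by rw [hnreal]
    rw [hQn] at h
    rw [hBcast, hAcast]
    linarith
  have hfinal : (2:ℝ)^(Ω-3) ≤ ((B:ℝ) - (A:ℝ)) * (2:ℝ)^elow := by
    have hQfn : Qf q (n:ℝ) = (q:ℝ)*(n:ℝ)^2 := rfl
    have hexp : Ω - 3 ≤ (Qf q (n:ℝ) + elow) - 1 := by
      rw [hQfn, helowdef]
      linarith [halg, hlamB]
    have h1 : (2:ℝ)^(Ω-3) ≤ (2:ℝ)^((Qf q (n:ℝ) + elow) - 1) :=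
      Real.rpow_le_rpow_of_exponent_le one_le_two hexp
    have h2 : (2:ℝ)^((Qf q (n:ℝ) + elow) - 1) = (1/2) * (2:ℝ)^(Qf q (n:ℝ)) * (2:ℝ)^elow := by
      rw [show (Qf q (n:ℝ) + elow) - 1 = Qf q (n:ℝ) + (elow + (-1)) by ring]
      rw [Real.rpow_add two_pos, Real.rpow_add two_pos, Real.rpow_neg_one]
      ring
    rw [h2] at h1
    refine le_trans h1 ?_
    exact mul_le_mul_of_nonneg_right hBA (le_of_lt (Real.rpow_pos_of_pos two_pos elow))
  unfold Pi2
  have hchain : ENNReal.ofReal ((2:ℝ)^(Ω-3))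
      ≤ ∑ k ∈ Finset.Ico A B,
          ENNReal.ofReal ((2:ℝ)^(-lam*(k:ℝ) - τ*(Nf q Ξ k:ℝ) + τ*ξ*(Bf q Ξ k:ℝ))) := by
    rw [← ENNReal.ofReal_sum_of_nonneg (fun k _ => le_of_lt (Real.rpow_pos_of_pos two_pos _))]
    exact ENNReal.ofReal_le_ofReal (le_trans hfinal hsumconst)
  exact le_trans hchain (ENNReal.sum_le_tsum _)
end

section
/- For every τ in the open interval ((q−2)/(q−1), 1) and every real Δ ≥ 1 one has 2^(Δ−4) ≤ Π(τ, 2^(−q·((Ξ−2ξ)/(q(1−τ)) + Δ)²)). -/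
open scoped Classical ENNReal
open Real Set Filter

def aN (q : ℤ) (s : ℕ) : ℕ := 2 ^ (q.toNat * s ^ 2)
def LN (q Ξ : ℤ) (s : ℕ) : ℕ := (q * (2 * s + 1) + Ξ).toNat

section basic
variable {q Ξ : ℤ}

lemma LN_cast (hq : 3 ≤ q) (hqΞ : 1 ≤ q + Ξ) (s : ℕ) :
    (LN q Ξ s : ℤ) = q * (2 * s + 1) + Ξ := by
  have hs : (0:ℤ) ≤ (s:ℤ) := Int.natCast_nonneg s
  have h : (1:ℤ) ≤ q * (2 * s + 1) + Ξ := by nlinarith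
  unfold LN
  omega

lemma one_le_LN (hq : 3 ≤ q) (hqΞ : 1 ≤ q + Ξ) (s : ℕ) : 1 ≤ LN q Ξ s := by
  have := LN_cast hq hqΞ s
  have hs : (0:ℤ) ≤ (s:ℤ) := Int.natCast_nonneg s
  have h : (1:ℤ) ≤ q * (2 * s + 1) + Ξ := by nlinarith
  omega

lemma one_le_aN (s : ℕ) : 1 ≤ aN q s := Nat.one_le_two_pow

lemma key_step (hq : 3 ≤ q) (hqΞ : 1 ≤ q + Ξ) (hpow' : q + 1 + Ξ ≤ 2 ^ (q.toNat - 1)) (s : ℕ) :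
    2 * (1 + LN q Ξ s) ≤ 2 ^ (q.toNat * (2 * s + 1)) := by
  set q' := q.toNat with hq'
  have hq3 : 3 ≤ q' := by omega
  have hqc : (q' : ℤ) = q := by omega
  zify
  rw [LN_cast hq hqΞ]
  have hXi : Ξ ≤ 2 ^ (q' - 1) - q - 1 := by omega
  rcases Nat.eq_zero_or_pos s with rfl | hs
  · simp only [Nat.mul_zero, Nat.zero_add, Nat.mul_one]
    have h2 : (2:ℤ) ^ q' = 2 * 2 ^ (q' - 1) := by
      rw [← pow_succ']
      congr 1
      omega
    omega
  · -- s ≥ 1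
    have hmul : q' * (2 * s + 1) = 2 * q' * s + q' := by ring
    have h1 : 2 * q' * s < 2 ^ (2 * q' * s) := Nat.lt_two_pow_self
    have h2 : 2 * (q' : ℤ) * s < 2 ^ (2 * q' * s) := by exact_mod_cast h1
    have h3 : 2 * q' * s + 1 ≤ q' * (2 * s + 1) - 1 := by
      apply Nat.le_sub_one_of_lt; nlinarith
    have h4 : (2:ℤ) ^ (2 * q' * s + 1) ≤ 2 ^ (q' * (2 * s + 1) - 1) := by
      apply pow_le_pow_right₀ (by norm_num) h3
    have h5 : q' ≤ q' * (2 * s + 1) - 1 := by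
      apply Nat.le_sub_one_of_lt; nlinarith
    have h6 : (2:ℤ) ^ q' ≤ 2 ^ (q' * (2 * s + 1) - 1) := by
      apply pow_le_pow_right₀ (by norm_num) h5
    have h7 : (2:ℤ) ^ (q' * (2 * s + 1)) = 2 * 2 ^ (q' * (2 * s + 1) - 1) := by
      rw [← pow_succ']
      congr 1
      omega
    have h10 : (2:ℤ) ^ (2 * q' * s + 1) = 2 * 2 ^ (2 * q' * s) := by rw [pow_succ']
    have h11 : (2:ℤ) ^ q' = 2 * 2 ^ (q' - 1) := by
      rw [← pow_succ']
      congr 1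
      omega
    have e1 : q * (2 * (s:ℤ) + 1) = 2 * ((q':ℤ) * (s:ℤ)) + (q':ℤ) := by
      rw [← hqc]; ring
    linarith [h2, h4, h6, h7, h10, h11]

lemma key (hq : 3 ≤ q) (hqΞ : 1 ≤ q + Ξ) (hpow' : q + 1 + Ξ ≤ 2 ^ (q.toNat - 1)) (s : ℕ) :
    2 * (aN q s + LN q Ξ s) ≤ aN q (s + 1) := by
  have h1 : aN q (s+1) = aN q s * 2 ^ (q.toNat * (2 * s + 1)) := by
    unfold aN
    rw [← pow_add]
    congr 1
    ring
  have h2 := key_step hq hqΞ hpow' s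
  have h3 : 1 ≤ aN q s := one_le_aN s
  calc 2 * (aN q s + LN q Ξ s) ≤ aN q s * (2 * (1 + LN q Ξ s)) := by nlinarith
    _ ≤ aN q s * 2 ^ (q.toNat * (2 * s + 1)) := Nat.mul_le_mul_left _ h2
    _ = aN q (s+1) := h1.symm

end basic

section mono
variable {q Ξ : ℤ}

lemma aN_lt_succ (hq : 3 ≤ q) (hqΞ : 1 ≤ q + Ξ) (hpow' : q + 1 + Ξ ≤ 2 ^ (q.toNat - 1)) (s : ℕ) :
    aN q s < aN q (s + 1) := by
  have h := key hq hqΞ hpow' s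
  have h1 := one_le_aN (q := q) s
  have h2 := one_le_LN hq hqΞ s
  omega

lemma aN_mono (hq : 3 ≤ q) (hqΞ : 1 ≤ q + Ξ) (hpow' : q + 1 + Ξ ≤ 2 ^ (q.toNat - 1)) :
    StrictMono (aN q) :=
  strictMono_nat_of_lt_succ (aN_lt_succ hq hqΞ hpow')

lemma f_lt_succ (hq : 3 ≤ q) (hqΞ : 1 ≤ q + Ξ) (hpow' : q + 1 + Ξ ≤ 2 ^ (q.toNat - 1)) (s : ℕ) :
    aN q s + LN q Ξ s < aN q (s + 1) := by
  have h := key hq hqΞ hpow' s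
  have h1 := one_le_aN (q := q) s
  have h2 := one_le_LN hq hqΞ s
  omega

lemma f_mono (hq : 3 ≤ q) (hqΞ : 1 ≤ q + Ξ) (hpow' : q + 1 + Ξ ≤ 2 ^ (q.toNat - 1)) :
    StrictMono (fun s => aN q s + LN q Ξ s) := by
  apply strictMono_nat_of_lt_succ
  intro s
  have h1 := f_lt_succ hq hqΞ hpow' s
  have h2 := one_le_LN hq hqΞ (s + 1)
  omega

lemma f_le_aN (hq : 3 ≤ q) (hqΞ : 1 ≤ q + Ξ) (hpow' : q + 1 + Ξ ≤ 2 ^ (q.toNat - 1))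
    {s t : ℕ} (h : s < t) : aN q s + LN q Ξ s < aN q t :=
  lt_of_lt_of_le (f_lt_succ hq hqΞ hpow' s) ((aN_mono hq hqΞ hpow').monotone h)

end mono

section char
variable {q Ξ : ℤ}

lemma endpoint_eq (hq : 3 ≤ q) (s : ℕ) : (2 : ℝ) ^ (Qf q (s : ℝ)) = (aN q s : ℝ) := by
  have hqz : (q.toNat : ℤ) = q := by omega
  have hqc : ((q.toNat : ℤ) : ℝ) = (q : ℝ) := by exact_mod_cast hqz
  have h1 : Qf q (s : ℝ) = ((q.toNat * s ^ 2 : ℕ) : ℝ) := by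
    unfold Qf
    push_cast
    push_cast at hqc
    rw [← hqc]
  rw [h1, Real.rpow_natCast]
  unfold aN
  push_cast
  ring

lemma upper_eq (hq : 3 ≤ q) (hqΞ : 1 ≤ q + Ξ) (s : ℕ) :
    ((aN q s : ℕ) : ℝ) + Qf q ((s : ℝ) + 1) - Qf q (s : ℝ) + (Ξ : ℝ)
      = ((aN q s + LN q Ξ s : ℕ) : ℝ) := by
  have hL : ((LN q Ξ s : ℕ) : ℝ) = (q : ℝ) * (2 * (s : ℝ) + 1) + (Ξ : ℝ) := by
    have := LN_cast hq hqΞ s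
    exact_mod_cast this
  unfold Qf
  push_cast [hL]
  ring

lemma xseq_zero_iff (hq : 3 ≤ q) (hqΞ : 1 ≤ q + Ξ) (j : ℕ) :
    xseq q Ξ j = 0 ↔ ∃ s : ℕ, aN q s ≤ j + 1 ∧ j + 1 < aN q s + LN q Ξ s := by
  have hmem : ∀ s : ℕ, ((j : ℝ) + 1) ∈ Iset q Ξ (s : ℝ) ↔
      (aN q s ≤ j + 1 ∧ j + 1 < aN q s + LN q Ξ s) := by
    intro s
    unfold Iset
    rw [Set.mem_Ico, endpoint_eq hq s, upper_eq hq hqΞ s]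
    constructor
    · rintro ⟨h1, h2⟩
      exact ⟨by exact_mod_cast h1, by exact_mod_cast h2⟩
    · rintro ⟨h1, h2⟩
      exact ⟨by exact_mod_cast h1, by exact_mod_cast h2⟩
  unfold xseq
  split_ifs with h
  · simp only [eq_self_iff_true, true_iff]
    obtain ⟨s, hs⟩ := h
    exact ⟨s, (hmem s).1 hs⟩
  · refine iff_of_false (by norm_num) ?_
    rintro ⟨s, hs⟩
    exact h ⟨s, (hmem s).2 hs⟩

lemma xseq_one_iff (hq : 3 ≤ q) (hqΞ : 1 ≤ q + Ξ) (j : ℕ) :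
    xseq q Ξ j = 1 ↔ ¬ ∃ s : ℕ, aN q s ≤ j + 1 ∧ j + 1 < aN q s + LN q Ξ s := by
  have h01 : xseq q Ξ j = 0 ∨ xseq q Ξ j = 1 := by
    unfold xseq; split_ifs <;> simp
  have h := xseq_zero_iff hq hqΞ (q := q) (Ξ := Ξ) j
  constructor
  · intro h1 h2
    rw [← h] at h2
    omega
  · intro h2
    rcases h01 with h0 | h1
    · exact absurd (h.1 h0) h2
    · exact h1

end char

section Ncount
variable {q Ξ : ℤ}

lemma sum_odd (S : ℕ) : ∑ s ∈ Finset.range S, (2 * (s : ℤ) + 1) = (S : ℤ) ^ 2 := by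
  induction S with
  | zero => simp
  | succ n ih =>
    rw [Finset.sum_range_succ, ih]
    push_cast
    ring

lemma Nval (hq : 3 ≤ q) (hqΞ : 1 ≤ q + Ξ) (hpow' : q + 1 + Ξ ≤ 2 ^ (q.toNat - 1))
    {S k : ℕ} (hS : 1 ≤ S) (h1 : aN q (S - 1) + LN q Ξ (S - 1) ≤ k) (h2 : k < aN q S) :
    (Nf q Ξ k : ℤ) = q * (S : ℤ) ^ 2 + (S : ℤ) * Ξ := by
  have hfilter : (Finset.range k).filter (fun j => xseq q Ξ j = 0)
      = (Finset.range S).biUnion (fun s => Finset.Ico (aN q s - 1) (aN q s + LN q Ξ s - 1)) := by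
    ext j
    simp only [Finset.mem_filter, Finset.mem_range, Finset.mem_biUnion, Finset.mem_Ico,
      xseq_zero_iff hq hqΞ]
    constructor
    · rintro ⟨hjk, s, hs1, hs2⟩
      have has : 1 ≤ aN q s := one_le_aN s
      have hsS : s < S := by
        by_contra hcon
        push_neg at hcon
        have : aN q S ≤ aN q s := (aN_mono hq hqΞ hpow').monotone hcon
        omega
      exact ⟨s, hsS, by omega, by omega⟩
    · rintro ⟨s, hsS, hj1, hj2⟩
      have has : 1 ≤ aN q s := one_le_aN s
      have hls : 1 ≤ LN q Ξ s := one_le_LN hq hqΞ s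
      have hmono : aN q s + LN q Ξ s ≤ aN q (S - 1) + LN q Ξ (S - 1) :=
        (f_mono hq hqΞ hpow').monotone (by omega : s ≤ S - 1)
      exact ⟨by omega, s, by omega, by omega⟩
  have hdisj : ∀ s ∈ Finset.range S, ∀ t ∈ Finset.range S, s ≠ t →
      Disjoint (Finset.Ico (aN q s - 1) (aN q s + LN q Ξ s - 1))
        (Finset.Ico (aN q t - 1) (aN q t + LN q Ξ t - 1)) := by
    have hd : ∀ s t : ℕ, s < t →
        Disjoint (Finset.Ico (aN q s - 1) (aN q s + LN q Ξ s - 1))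
          (Finset.Ico (aN q t - 1) (aN q t + LN q Ξ t - 1)) := by
      intro s t hst
      rw [Finset.disjoint_left]
      intro x hx1 hx2
      simp only [Finset.mem_Ico] at hx1 hx2
      have h3 : aN q s + LN q Ξ s < aN q t := f_le_aN hq hqΞ hpow' hst
      have has : 1 ≤ aN q s := one_le_aN s
      have hat : 1 ≤ aN q t := one_le_aN t
      omega
    intro s _ t _ hst
    rcases hst.lt_or_gt with h | h
    · exact hd s t h
    · exact (hd t s h).symm
  rw [Nf, hfilter, Finset.card_biUnion hdisj]
  have hcard : ∀ s ∈ Finset.range S,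
      (Finset.Ico (aN q s - 1) (aN q s + LN q Ξ s - 1)).card = LN q Ξ s := by
    intro s _
    rw [Nat.card_Ico]
    have := one_le_aN (q := q) s
    omega
  rw [Finset.sum_congr rfl hcard]
  push_cast [LN_cast hq hqΞ]
  rw [Finset.sum_add_distrib, ← Finset.mul_sum, Finset.sum_const, sum_odd, Finset.card_range]
  ring
end Ncount

section Bcount
variable {q Ξ : ℤ}

lemma xne_iff (hq : 3 ≤ q) (hqΞ : 1 ≤ q + Ξ) (j : ℕ) :
    xseq q Ξ j ≠ xseq q Ξ (j + 1) ↔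
      (((∃ s : ℕ, aN q s ≤ j + 1 ∧ j + 1 < aN q s + LN q Ξ s) ∧
        ¬(∃ s : ℕ, aN q s ≤ j + 2 ∧ j + 2 < aN q s + LN q Ξ s)) ∨
       (¬(∃ s : ℕ, aN q s ≤ j + 1 ∧ j + 1 < aN q s + LN q Ξ s) ∧
        (∃ s : ℕ, aN q s ≤ j + 2 ∧ j + 2 < aN q s + LN q Ξ s))) := by
  have hv : ∀ i : ℕ, xseq q Ξ i = 0 ∨ xseq q Ξ i = 1 := by
    intro i; unfold xseq; split_ifs <;> simp
  have a1 := xseq_zero_iff hq hqΞ (q := q) (Ξ := Ξ) j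
  have a2 := xseq_zero_iff hq hqΞ (q := q) (Ξ := Ξ) (j + 1)
  have b1 := xseq_one_iff hq hqΞ (q := q) (Ξ := Ξ) j
  have b2 := xseq_one_iff hq hqΞ (q := q) (Ξ := Ξ) (j + 1)
  have e2 : j + 1 + 1 = j + 2 := rfl
  rw [e2] at a2 b2
  constructor
  · intro hne
    rcases hv j with h0 | h0 <;> rcases hv (j + 1) with h1 | h1
    · rw [h0, h1] at hne; exact absurd rfl hne
    · exact Or.inl ⟨a1.1 h0, b2.1 h1⟩
    · exact Or.inr ⟨b1.1 h0, a2.1 h1⟩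
    · rw [h0, h1] at hne; exact absurd rfl hne
  · rintro (⟨hz, hnz⟩ | ⟨hnz, hz⟩)
    · rw [a1.2 hz, b2.2 hnz]; norm_num
    · rw [b1.2 hnz, a2.2 hz]; norm_num

lemma aN_zero : aN q 0 = 1 := by simp [aN]

lemma Bval (hq : 3 ≤ q) (hqΞ : 1 ≤ q + Ξ) (hpow' : q + 1 + Ξ ≤ 2 ^ (q.toNat - 1))
    {S k : ℕ} (hS : 1 ≤ S) (h1 : aN q (S - 1) + LN q Ξ (S - 1) ≤ k) (h2 : k < aN q S) :
    Bf q Ξ k = 2 * S := by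
  have haS1 := one_le_aN (q := q) (S - 1)
  have hlS1 := one_le_LN hq hqΞ (q := q) (Ξ := Ξ) (S - 1)
  have hk2 : 2 ≤ k := by omega
  rw [Bf, if_neg (by omega)]
  have hfilter : (Finset.range (k - 1)).filter (fun j => xseq q Ξ j ≠ xseq q Ξ (j + 1)) =
      ((Finset.range S).image (fun s => aN q s + LN q Ξ s - 2)) ∪
        ((Finset.Ico 1 S).image (fun s => aN q s - 2)) := by
    ext j
    simp only [Finset.mem_filter, Finset.mem_range, Finset.mem_union, Finset.mem_image,
      Finset.mem_Ico, xne_iff hq hqΞ]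
    constructor
    · rintro ⟨hjk, hd⟩
      rcases hd with ⟨⟨s, hs1, hs2⟩, hn⟩ | ⟨hn, ⟨s, hs1, hs2⟩⟩
      · have hj2 : j + 2 = aN q s + LN q Ξ s := by
          rcases Nat.lt_or_ge (j + 2) (aN q s + LN q Ξ s) with h | h
          · exact absurd ⟨s, by omega, h⟩ hn
          · omega
        have hsS : s < S := (aN_mono hq hqΞ hpow').lt_iff_lt.mp (by omega)
        exact Or.inl ⟨s, hsS, by omega⟩
      · have hj2 : j + 2 = aN q s := by
          rcases Nat.lt_or_ge (j + 1) (aN q s) with h | h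
          · omega
          · exact absurd ⟨s, h, by omega⟩ hn
        have hs0 : 1 ≤ s := by
          rcases Nat.eq_zero_or_pos s with rfl | h
          · rw [aN_zero] at hj2; omega
          · exact h
        have hsS : s < S := (aN_mono hq hqΞ hpow').lt_iff_lt.mp (by omega)
        exact Or.inr ⟨s, ⟨hs0, hsS⟩, by omega⟩
    · rintro (⟨s, hsS, hj⟩ | ⟨s, ⟨hs1, hsS⟩, hj⟩)
      · have has := one_le_aN (q := q) s
        have hls := one_le_LN hq hqΞ (q := q) (Ξ := Ξ) s
        have hj2 : j + 2 = aN q s + LN q Ξ s := by omega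
        have hmono : aN q s + LN q Ξ s ≤ aN q (S - 1) + LN q Ξ (S - 1) :=
          (f_mono hq hqΞ hpow').monotone (by omega : s ≤ S - 1)
        refine ⟨by omega, Or.inl ⟨⟨s, by omega, by omega⟩, ?_⟩⟩
        rintro ⟨t, ht1, ht2⟩
        rcases Nat.lt_or_ge s t with h | h
        · have := f_le_aN hq hqΞ hpow' h
          omega
        · have : aN q t + LN q Ξ t ≤ aN q s + LN q Ξ s :=
            (f_mono hq hqΞ hpow').monotone h
          omega
      · have has := one_le_aN (q := q) s
        have hls := one_le_LN hq hqΞ (q := q) (Ξ := Ξ) s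
        have ha2 : 2 ≤ aN q s := by
          have h0 : aN q 0 < aN q s := (aN_mono hq hqΞ hpow') (by omega : 0 < s)
          rw [aN_zero] at h0; omega
        have hj2 : j + 2 = aN q s := by omega
        have hmono : aN q s ≤ aN q (S - 1) := (aN_mono hq hqΞ hpow').monotone (by omega)
        refine ⟨by omega, Or.inr ⟨?_, ⟨s, by omega, by omega⟩⟩⟩
        rintro ⟨t, ht1, ht2⟩
        rcases Nat.lt_or_ge t s with h | h
        · have := f_le_aN hq hqΞ hpow' h
          omega
        · have : aN q s ≤ aN q t := (aN_mono hq hqΞ hpow').monotone h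
          omega
  rw [hfilter]
  have hdisj : Disjoint ((Finset.range S).image (fun s => aN q s + LN q Ξ s - 2))
      ((Finset.Ico 1 S).image (fun s => aN q s - 2)) := by
    rw [Finset.disjoint_left]
    rintro x hx1 hx2
    simp only [Finset.mem_image, Finset.mem_range, Finset.mem_Ico] at hx1 hx2
    obtain ⟨s, hsS, hs⟩ := hx1
    obtain ⟨t, ⟨ht1, htS⟩, ht⟩ := hx2
    have has := one_le_aN (q := q) s
    have hls := one_le_LN hq hqΞ (q := q) (Ξ := Ξ) s
    have ha2 : 2 ≤ aN q t := by
      have h0 : aN q 0 < aN q t := (aN_mono hq hqΞ hpow') (by omega : 0 < t)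
      rw [aN_zero] at h0; omega
    have heq : aN q s + LN q Ξ s = aN q t := by omega
    rcases Nat.lt_or_ge s t with h | h
    · have := f_le_aN hq hqΞ hpow' h
      omega
    · have : aN q t ≤ aN q s := (aN_mono hq hqΞ hpow').monotone h
      omega
  rw [Finset.card_union_of_disjoint hdisj]
  have hc1 : ((Finset.range S).image (fun s => aN q s + LN q Ξ s - 2)).card = S := by
    rw [Finset.card_image_of_injOn, Finset.card_range]
    intro s _ t _ h
    have has := one_le_aN (q := q) s
    have hat := one_le_aN (q := q) t
    have hls := one_le_LN hq hqΞ (q := q) (Ξ := Ξ) s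
    have hlt := one_le_LN hq hqΞ (q := q) (Ξ := Ξ) t
    exact (f_mono hq hqΞ hpow').injective (by dsimp at h; omega)
  have hc2 : ((Finset.Ico 1 S).image (fun s => aN q s - 2)).card = S - 1 := by
    rw [Finset.card_image_of_injOn, Nat.card_Ico]
    intro s hs t ht h
    simp only [Finset.coe_Ico, Set.mem_Ico] at hs ht
    have has : aN q 0 < aN q s := (aN_mono hq hqΞ hpow') (by omega : 0 < s)
    have hat : aN q 0 < aN q t := (aN_mono hq hqΞ hpow') (by omega : 0 < t)
    rw [aN_zero] at has hat
    exact (aN_mono hq hqΞ hpow').injective (by dsimp at h; omega)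
  rw [hc1, hc2]
  omega

end Bcount

set_option maxHeartbeats 1000000 in
theorem stmt10 (Ξ q : ℤ) (hq : 3 ≤ q) (hqΞ : 1 ≤ q + Ξ)
    (hpow : (q : ℝ) + 1 + (Ξ : ℝ) ≤ (2 : ℝ) ^ ((q : ℝ) - 1))
    (ξ : ℝ) (hξ1 : 1 ≤ (Ξ : ℝ) - 2 * ξ) (hξ2 : (Ξ : ℝ) - 2 * ξ ≤ 2) :
    ∀ τ : ℝ, ((q : ℝ) - 2) / ((q : ℝ) - 1) < τ → τ < 1 → ∀ Δ : ℝ, 1 ≤ Δ →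
      ENNReal.ofReal ((2 : ℝ) ^ (Δ - 4)) ≤
        Pi2 q Ξ ξ τ
          ((2 : ℝ) ^ (-(q : ℝ) *
            (((Ξ : ℝ) - 2 * ξ) / ((q : ℝ) * (1 - τ)) + Δ) ^ 2)) := by
  intro τ hτ1 hτ2 Δ hΔ
  have hq1 : (3 : ℝ) ≤ (q : ℝ) := by exact_mod_cast hq
  have hqt3 : 3 ≤ q.toNat := by omega
  have hqtc : ((q.toNat : ℕ) : ℝ) = (q : ℝ) := by
    have : (q.toNat : ℤ) = q := by omega
    exact_mod_cast this
  -- integer form of the power hypothesis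
  have hpow' : q + 1 + Ξ ≤ 2 ^ (q.toNat - 1) := by
    have he : ((q.toNat - 1 : ℕ) : ℝ) = (q : ℝ) - 1 := by
      have h1 : 1 ≤ q.toNat := by omega
      push_cast [Nat.cast_sub h1]
      rw [hqtc]
    rw [← he, Real.rpow_natCast] at hpow
    exact_mod_cast hpow
  have hτ0 : 0 < τ := by
    have h0 : (0 : ℝ) ≤ ((q : ℝ) - 2) / ((q : ℝ) - 1) :=
      div_nonneg (by linarith) (by linarith)
    linarith
  have h1τ : 0 < 1 - τ := by linarith
  have hd : 0 < (q : ℝ) * (1 - τ) := by positivity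
  set c : ℝ := (Ξ : ℝ) - 2 * ξ with hc
  set m : ℝ := c / ((q : ℝ) * (1 - τ)) with hm
  have hm0 : 0 < m := by
    apply div_pos (by linarith) hd
  have hcm : c = (q : ℝ) * (1 - τ) * m := by
    rw [hm]; field_simp
  set S : ℕ := Nat.floor (m + Δ) with hSdef
  have hmΔ : (1 : ℝ) ≤ m + Δ := by linarith
  have hS1 : 1 ≤ S := Nat.le_floor (by exact_mod_cast hmΔ)
  have hSle : (S : ℝ) ≤ m + Δ := Nat.floor_le (by linarith)
  have hSgt : m + Δ - 1 < (S : ℝ) := Nat.sub_one_lt_floor _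
  have hS1r : (1 : ℝ) ≤ (S : ℝ) := by exact_mod_cast hS1
  set lam : ℝ := (2 : ℝ) ^ (-(q : ℝ) * (m + Δ) ^ 2) with hlam
  set A : ℕ := aN q (S - 1) + LN q Ξ (S - 1) with hA
  set E : ℕ := aN q S with hE
  have hkey : 2 * A ≤ E := by
    have h := key hq hqΞ hpow' (S - 1)
    have hs : S - 1 + 1 = S := by omega
    rw [hs] at h
    exact h
  have haS1 := one_le_aN (q := q) (S - 1)
  have hlS1 := one_le_LN hq hqΞ (q := q) (Ξ := Ξ) (S - 1)
  have hA2 : 2 ≤ A := by omega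
  have hAE : A < E := by omega
  -- exponent of E
  have hqS1 : 1 ≤ q.toNat * S ^ 2 := Nat.mul_pos (by omega) (by positivity)
  have hEcast : (E : ℝ) = (2 : ℝ) ^ ((q : ℝ) * (S : ℝ) ^ 2) := by
    have h1 : (q : ℝ) * (S : ℝ) ^ 2 = ((q.toNat * S ^ 2 : ℕ) : ℝ) := by
      push_cast [← hqtc]
      ring
    rw [h1, Real.rpow_natCast]
    rw [hE]
    unfold aN
    push_cast
    ring
  -- the common lower bound for each term
  set t0 : ℝ := (2 : ℝ) ^ (-1 - τ * ((q : ℝ) * (S : ℝ) ^ 2 + (S : ℝ) * (Ξ : ℝ))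
      + τ * ξ * (2 * (S : ℝ))) with ht0
  have hterm : ∀ k ∈ Finset.Ico A E, ENNReal.ofReal t0 ≤
      ENNReal.ofReal ((2 : ℝ) ^ (-lam * (k : ℝ) - τ * (Nf q Ξ k : ℝ) + τ * ξ * (Bf q Ξ k : ℝ))) := by
    intro k hk
    rw [Finset.mem_Ico] at hk
    obtain ⟨hk1, hk2⟩ := hk
    have hN : (Nf q Ξ k : ℝ) = (q : ℝ) * (S : ℝ) ^ 2 + (S : ℝ) * (Ξ : ℝ) := by
      have := Nval hq hqΞ hpow' hS1 hk1 hk2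
      exact_mod_cast this
    have hB : (Bf q Ξ k : ℝ) = 2 * (S : ℝ) := by
      have := Bval hq hqΞ hpow' hS1 hk1 hk2
      exact_mod_cast this
    have hlamk : lam * (k : ℝ) ≤ 1 := by
      have hk0 : (k : ℝ) ≤ (E : ℝ) := by exact_mod_cast hk2.le
      have hl0 : 0 < lam := Real.rpow_pos_of_pos (by norm_num) _
      have h1 : lam * (k : ℝ) ≤ lam * (E : ℝ) := by
        apply mul_le_mul_of_nonneg_left hk0 hl0.le
      have h2 : lam * (E : ℝ) = (2 : ℝ) ^ (-(q : ℝ) * (m + Δ) ^ 2 + (q : ℝ) * (S : ℝ) ^ 2) := by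
        rw [hEcast, hlam, ← Real.rpow_add (by norm_num)]
      have h3 : -(q : ℝ) * (m + Δ) ^ 2 + (q : ℝ) * (S : ℝ) ^ 2 ≤ 0 := by
        have hsq : (S : ℝ) ^ 2 ≤ (m + Δ) ^ 2 := by nlinarith
        nlinarith
      have h4 : (2 : ℝ) ^ (-(q : ℝ) * (m + Δ) ^ 2 + (q : ℝ) * (S : ℝ) ^ 2) ≤ 1 :=
        Real.rpow_le_one_of_one_le_of_nonpos (by norm_num) h3
      linarith
    apply ENNReal.ofReal_le_ofReal
    rw [ht0, hN, hB]
    apply Real.rpow_le_rpow_of_exponent_le (by norm_num)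
    linarith
  -- sum over the interval
  have hsum : ∑ k ∈ Finset.Ico A E, ENNReal.ofReal t0 ≤
      ∑ k ∈ Finset.Ico A E,
        ENNReal.ofReal ((2 : ℝ) ^ (-lam * (k : ℝ) - τ * (Nf q Ξ k : ℝ) + τ * ξ * (Bf q Ξ k : ℝ))) :=
    Finset.sum_le_sum hterm
  have htsum : ∑ k ∈ Finset.Ico A E,
      ENNReal.ofReal ((2 : ℝ) ^ (-lam * (k : ℝ) - τ * (Nf q Ξ k : ℝ) + τ * ξ * (Bf q Ξ k : ℝ)))
      ≤ Pi2 q Ξ ξ τ lam := ENNReal.sum_le_tsum _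
  have hconst : ∑ k ∈ Finset.Ico A E, ENNReal.ofReal t0
      = ((E - A : ℕ) : ℝ≥0∞) * ENNReal.ofReal t0 := by
    rw [Finset.sum_const, Nat.card_Ico, nsmul_eq_mul]
  -- count lower bound
  have hcount : 2 ^ (q.toNat * S ^ 2 - 1) ≤ E - A := by
    have hE2 : E = 2 * 2 ^ (q.toNat * S ^ 2 - 1) := by
      rw [hE]
      unfold aN
      rw [← pow_succ']
      congr 1
      omega
    omega
  have hcount' : ENNReal.ofReal ((2 : ℝ) ^ ((q : ℝ) * (S : ℝ) ^ 2 - 1)) ≤ ((E - A : ℕ) : ℝ≥0∞) := by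
    have h1 : (2 : ℝ) ^ ((q : ℝ) * (S : ℝ) ^ 2 - 1) = ((2 ^ (q.toNat * S ^ 2 - 1) : ℕ) : ℝ) := by
      have h2 : (q : ℝ) * (S : ℝ) ^ 2 - 1 = ((q.toNat * S ^ 2 - 1 : ℕ) : ℝ) := by
        push_cast [Nat.cast_sub hqS1, ← hqtc]
        ring
      rw [h2, Real.rpow_natCast]
      push_cast
      ring
    rw [h1, ENNReal.ofReal_natCast]
    exact_mod_cast hcount
  -- final exponent inequality
  have hfin : Δ - 4 ≤ ((q : ℝ) * (S : ℝ) ^ 2 - 1) +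
      (-1 - τ * ((q : ℝ) * (S : ℝ) ^ 2 + (S : ℝ) * (Ξ : ℝ)) + τ * ξ * (2 * (S : ℝ))) := by
    have ha : c ≤ (q : ℝ) * (1 - τ) * (S : ℝ) := by
      rw [hcm]
      have : m ≤ (S : ℝ) := by linarith
      nlinarith
    have hb : Δ - 1 ≤ (S : ℝ) - m := by linarith
    have hSc : 0 ≤ (S : ℝ) * c := by positivity
    have h1 : (1 - τ) * (q : ℝ) * (S : ℝ) ^ 2 - τ * ((S : ℝ) * c) ≥ Δ - 1 := by
      have e2 : (q : ℝ) * (1 - τ) * (S : ℝ) - c = (q : ℝ) * (1 - τ) * ((S : ℝ) - m) := by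
        rw [hcm]; ring
      nlinarith [mul_le_mul_of_nonneg_left hb hd.le,
        mul_le_mul_of_nonneg_right ha (by linarith : (0:ℝ) ≤ Δ - 1),
        mul_le_mul_of_nonneg_left (mul_le_mul_of_nonneg_left hb hd.le) (by linarith : (0:ℝ) ≤ (S:ℝ))]
    have hcc : τ * ξ * (2 * (S : ℝ)) - τ * ((S : ℝ) * (Ξ : ℝ)) = -τ * ((S : ℝ) * c) := by
      rw [hc]; ring
    nlinarith [h1]
  -- put everything together
  have hmain : ENNReal.ofReal ((2 : ℝ) ^ (Δ - 4)) ≤ ((E - A : ℕ) : ℝ≥0∞) * ENNReal.ofReal t0 := by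
    have hstep : ENNReal.ofReal ((2 : ℝ) ^ (Δ - 4)) ≤
        ENNReal.ofReal ((2 : ℝ) ^ ((q : ℝ) * (S : ℝ) ^ 2 - 1)) * ENNReal.ofReal t0 := by
      rw [← ENNReal.ofReal_mul (by positivity)]
      apply ENNReal.ofReal_le_ofReal
      rw [ht0, ← Real.rpow_add (by norm_num)]
      exact Real.rpow_le_rpow_of_exponent_le (by norm_num) hfin
    exact le_trans hstep (mul_le_mul_left hcount' _)
  have : Pi2 q Ξ ξ τ ((2 : ℝ) ^ (-(q : ℝ) * (((Ξ : ℝ) - 2 * ξ) / ((q : ℝ) * (1 - τ)) + Δ) ^ 2))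
      = Pi2 q Ξ ξ τ lam := rfl
  rw [this]
  calc ENNReal.ofReal ((2 : ℝ) ^ (Δ - 4))
      ≤ ((E - A : ℕ) : ℝ≥0∞) * ENNReal.ofReal t0 := hmain
    _ = ∑ k ∈ Finset.Ico A E, ENNReal.ofReal t0 := hconst.symm
    _ ≤ _ := le_trans hsum htsum
end

section
/- For every τ ≥ 1, the sum over all integers s ≥ 0 and all integers k lying in J_s of 2^(−τ·N(k) + τ·ξ·B(k)) is at most 2^(−τ)/(1 − 2^(−τ)). -/
open scoped Classical ENNReal
open Real Set Filter

namespace S12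

def A (q : ℤ) (t : ℕ) : ℕ := 2 ^ (q.toNat * t ^ 2)

def L (q Ξ : ℤ) (t : ℕ) : ℕ := (q * (2 * (t : ℤ) + 1) + Ξ).toNat

variable {q Ξ : ℤ}

lemma L_cast (hq : 3 ≤ q) (hqΞ : 1 ≤ q + Ξ) (t : ℕ) :
    (L q Ξ t : ℤ) = q * (2 * (t : ℤ) + 1) + Ξ := by
  have ht : (0:ℤ) ≤ (t:ℤ) := Int.ofNat_nonneg t
  have : (0:ℤ) ≤ q * (2 * (t:ℤ) + 1) + Ξ := by nlinarith
  exact Int.toNat_of_nonneg this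

lemma L_pos (hq : 3 ≤ q) (hqΞ : 1 ≤ q + Ξ) (t : ℕ) : 1 ≤ L q Ξ t := by
  have h := L_cast hq hqΞ t
  have ht : (0:ℤ) ≤ (t:ℤ) := Int.ofNat_nonneg t
  have : (1:ℤ) ≤ (L q Ξ t : ℤ) := by rw [h]; nlinarith
  exact_mod_cast this

lemma A_pos (t : ℕ) : 1 ≤ A q t := Nat.one_le_two_pow

lemma A_castR (hq : 3 ≤ q) (t : ℕ) : ((A q t : ℕ) : ℝ) = (2:ℝ) ^ (Qf q (t:ℝ)) := by
  have hq0 : (0:ℤ) ≤ q := by omega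
  have h1 : ((q.toNat * t ^ 2 : ℕ) : ℝ) = (q:ℝ) * (t:ℝ)^2 := by
    have : ((q.toNat : ℤ) : ℝ) = (q : ℝ) := by rw [Int.toNat_of_nonneg hq0]
    push_cast at this ⊢
    rw [this]
  rw [Qf, ← h1, Real.rpow_natCast, A]
  push_cast
  ring

lemma L_castR (hq : 3 ≤ q) (hqΞ : 1 ≤ q + Ξ) (t : ℕ) :
    ((L q Ξ t : ℕ) : ℝ) = (q:ℝ) * (2 * (t:ℝ) + 1) + (Ξ:ℝ) := by
  have := L_cast hq hqΞ t
  exact_mod_cast congrArg (fun z : ℤ => (z : ℝ)) this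

lemma AL_castR (hq : 3 ≤ q) (hqΞ : 1 ≤ q + Ξ) (t : ℕ) :
    ((A q t + L q Ξ t : ℕ) : ℝ)
      = (2:ℝ) ^ (Qf q (t:ℝ)) + Qf q ((t:ℝ) + 1) - Qf q (t:ℝ) + (Ξ:ℝ) := by
  push_cast [A_castR hq t, L_castR hq hqΞ t]
  simp only [Qf]
  ring

lemma A_mono (h : t ≤ t') : A q t ≤ A q t' :=
  Nat.pow_le_pow_right (by norm_num) (Nat.mul_le_mul_left _ (Nat.pow_le_pow_left h 2))

lemma hpowZ (hq : 3 ≤ q) (hpow : (q : ℝ) + 1 + (Ξ : ℝ) ≤ (2 : ℝ) ^ ((q : ℝ) - 1)) :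
    q + 1 + Ξ ≤ 2 ^ (q.toNat - 1) := by
  have hq0 : (0:ℤ) ≤ q := by omega
  have h3 : 3 ≤ q.toNat := by omega
  have hcast : (q:ℝ) - 1 = ((q.toNat - 1 : ℕ) : ℝ) := by
    have : ((q.toNat : ℤ) : ℝ) = (q : ℝ) := by rw [Int.toNat_of_nonneg hq0]
    push_cast [Nat.cast_sub (by omega : 1 ≤ q.toNat)] at this ⊢
    linarith
  rw [hcast, Real.rpow_natCast] at hpow
  exact_mod_cast hpow

lemma step (hq : 3 ≤ q) (hqΞ : 1 ≤ q + Ξ)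
    (hpow : (q : ℝ) + 1 + (Ξ : ℝ) ≤ (2 : ℝ) ^ ((q : ℝ) - 1)) (t : ℕ) :
    A q t + L q Ξ t + 1 ≤ A q (t + 1) := by
  have hZ := hpowZ hq hpow
  set n := q.toNat with hn
  have hn3 : 3 ≤ n := by omega
  have hqn : ((n : ℕ) : ℤ) = q := Int.toNat_of_nonneg (by omega)
  have ht : (0:ℤ) ≤ (t:ℤ) := Int.ofNat_nonneg t
  -- key inequality in ℤ
  have hsplit : (2:ℤ) ^ (n * (2*t+1)) = 2 ^ (n - 1) * 2 ^ (2*n*t + 1) := by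
    rw [← pow_add]; congr 1
    have : n * (2*t+1) = 2*n*t + n := by ring
    omega
  have h1 : (2*(n:ℤ)*t + 2) ≤ (2:ℤ) ^ (2*n*t + 1) := by
    have hnat : 2*n*t + 2 ≤ 2 ^ (2*n*t + 1) := Nat.lt_two_pow_self
    exact_mod_cast hnat
  have h2 : (2:ℤ) ≤ q + 1 + Ξ := by omega
  have hp1 : (0:ℤ) < 2 ^ (n-1) := by positivity
  have hp2 : (0:ℤ) < 2 ^ (2*n*t+1) := by positivity
  have key : q * (2*(t:ℤ)+1) + Ξ + 2 ≤ (2:ℤ) ^ (n * (2*t+1)) := by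
    rw [hsplit]
    have hmul : (q + 1 + Ξ) * (2*(n:ℤ)*t + 2) ≤ 2 ^ (n-1) * 2 ^ (2*n*t+1) :=
      mul_le_mul hZ h1 (by positivity) (by positivity)
    have hqt : (n:ℤ) * t = q * t := by rw [hqn]
    nlinarith [mul_nonneg (by omega : (0:ℤ) ≤ q + Ξ) ht]
  -- now conclude in ℤ
  have hA : (A q t : ℤ) = 2 ^ (n * t^2) := by simp [A, hn]
  have hA' : (A q (t+1) : ℤ) = 2 ^ (n * t^2) * 2 ^ (n * (2*t+1)) := by
    simp [A, hn]; push_cast; rw [← pow_add]; congr 1; ring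
  have hL := L_cast hq hqΞ t
  have hA1 : (1:ℤ) ≤ 2 ^ (n * t^2) := by exact_mod_cast (Nat.one_le_two_pow : (1:ℕ) ≤ 2 ^ (n * t^2))
  have goalZ : (A q t : ℤ) + (L q Ξ t : ℤ) + 1 ≤ (A q (t+1) : ℤ) := by
    rw [hA, hA', hL]
    nlinarith [key, hA1]
  exact_mod_cast goalZ

section
variable (hq : 3 ≤ q) (hqΞ : 1 ≤ q + Ξ)
variable (hpow : (q : ℝ) + 1 + (Ξ : ℝ) ≤ (2 : ℝ) ^ ((q : ℝ) - 1))
include hq hqΞ hpow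

lemma AL_lt_A {t t' : ℕ} (h : t < t') : A q t + L q Ξ t < A q t' := by
  have h1 := step hq hqΞ hpow t
  have h2 := A_mono (q := q) (show t + 1 ≤ t' by omega)
  omega

lemma AL_mono {t t' : ℕ} (h : t ≤ t') : A q t + L q Ξ t ≤ A q t' + L q Ξ t' := by
  rcases eq_or_lt_of_le h with rfl | h
  · exact le_refl _
  · have := AL_lt_A hq hqΞ hpow h
    omega

lemma A_strict {t t' : ℕ} (h : t < t') : A q t < A q t' := by
  have := AL_lt_A hq hqΞ hpow h
  have := L_pos hq hqΞ t
  omega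

end

lemma A_ge2 (hq : 3 ≤ q) {t : ℕ} (ht : 1 ≤ t) : 8 ≤ A q t := by
  have h3 : 3 ≤ q.toNat := by omega
  have : 3 ≤ q.toNat * t ^ 2 := le_trans h3 (Nat.le_mul_of_pos_right _ (by positivity))
  calc (8:ℕ) = 2 ^ 3 := by norm_num
  _ ≤ 2 ^ (q.toNat * t ^ 2) := Nat.pow_le_pow_right (by norm_num) this

lemma mem_Iset_iff (hq : 3 ≤ q) (hqΞ : 1 ≤ q + Ξ) (m t : ℕ) :
    ((m:ℝ) ∈ Iset q Ξ (t:ℝ)) ↔ (A q t ≤ m ∧ m < A q t + L q Ξ t) := by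
  simp only [Iset, Set.mem_Ico]
  rw [show (2:ℝ) ^ (Qf q (t:ℝ)) + Qf q ((t:ℝ) + 1) - Qf q (t:ℝ) + (Ξ:ℝ)
      = ((A q t + L q Ξ t : ℕ) : ℝ) from (AL_castR hq hqΞ t).symm,
    ← A_castR hq t]
  exact ⟨fun h => ⟨by exact_mod_cast h.1, by exact_mod_cast h.2⟩,
    fun h => ⟨by exact_mod_cast h.1, by exact_mod_cast h.2⟩⟩

lemma mem_Jset_iff (hq : 3 ≤ q) (hqΞ : 1 ≤ q + Ξ) (m t : ℕ) :
    ((m:ℝ) ∈ Jset q Ξ (t:ℝ)) ↔ (A q t + L q Ξ t ≤ m ∧ m < A q (t+1)) := by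
  simp only [Jset, Set.mem_Ico]
  rw [show (2:ℝ) ^ (Qf q (t:ℝ)) + Qf q ((t:ℝ) + 1) - Qf q (t:ℝ) + (Ξ:ℝ)
      = ((A q t + L q Ξ t : ℕ) : ℝ) from (AL_castR hq hqΞ t).symm,
    show (2:ℝ) ^ (Qf q ((t:ℝ) + 1)) = ((A q (t+1) : ℕ) : ℝ) by
      rw [A_castR hq (t+1)]; push_cast; ring_nf]
  exact ⟨fun h => ⟨by exact_mod_cast h.1, by exact_mod_cast h.2⟩,
    fun h => ⟨by exact_mod_cast h.1, by exact_mod_cast h.2⟩⟩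

lemma xseq_eq (hq : 3 ≤ q) (hqΞ : 1 ≤ q + Ξ) (j : ℕ) :
    xseq q Ξ j = if (∃ t : ℕ, A q t ≤ j + 1 ∧ j + 1 < A q t + L q Ξ t) then 0 else 1 := by
  rw [xseq]
  refine if_congr ?_ rfl rfl
  constructor
  · rintro ⟨t, ht⟩
    rw [show ((j:ℝ) + 1) = ((j + 1 : ℕ) : ℝ) by push_cast; ring, mem_Iset_iff hq hqΞ] at ht
    exact ⟨t, ht⟩
  · rintro ⟨t, ht⟩
    exact ⟨t, by
      rw [show ((j:ℝ) + 1) = ((j + 1 : ℕ) : ℝ) by push_cast; ring, mem_Iset_iff hq hqΞ]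
      exact ht⟩

lemma xseq_zero_iff (hq : 3 ≤ q) (hqΞ : 1 ≤ q + Ξ) (j : ℕ) :
    xseq q Ξ j = 0 ↔ ∃ t : ℕ, A q t ≤ j + 1 ∧ j + 1 < A q t + L q Ξ t := by
  rw [xseq_eq hq hqΞ]
  split_ifs with h
  · simpa using h
  · simpa using h

lemma Nf_eq (hq : 3 ≤ q) (hqΞ : 1 ≤ q + Ξ)
    (hpow : (q : ℝ) + 1 + (Ξ : ℝ) ≤ (2 : ℝ) ^ ((q : ℝ) - 1))
    {s k : ℕ} (hk1 : A q s + L q Ξ s ≤ k) (hk2 : k < A q (s+1)) :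
    Nf q Ξ k = ∑ t ∈ Finset.range (s+1), L q Ξ t := by
  have hset : (Finset.range k).filter (fun j => xseq q Ξ j = 0)
      = (Finset.range (s+1)).biUnion
        (fun t => Finset.Ico (A q t - 1) (A q t + L q Ξ t - 1)) := by
    ext j
    simp only [Finset.mem_filter, Finset.mem_range, Finset.mem_biUnion, Finset.mem_Ico,
      xseq_zero_iff hq hqΞ]
    constructor
    · rintro ⟨hjk, t, h1, h2⟩
      have hAt : 1 ≤ A q t := A_pos t
      have hts : t ≤ s := by
        by_contra h
        have h3 : A q (s+1) ≤ A q t := A_mono (by omega)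
        omega
      exact ⟨t, by omega, by omega, by omega⟩
    · rintro ⟨t, hts, h1, h2⟩
      have hAt : 1 ≤ A q t := A_pos t
      have hALs : A q t + L q Ξ t ≤ A q s + L q Ξ s := AL_mono hq hqΞ hpow (by omega)
      exact ⟨by omega, t, by omega, by omega⟩
  rw [Nf, hset, Finset.card_biUnion]
  · refine Finset.sum_congr rfl (fun t _ => ?_)
    have hAt : 1 ≤ A q t := A_pos t
    rw [Nat.card_Ico]
    omega
  · intro t ht t' ht' hne
    have key : ∀ a b : ℕ, a < b →
        Disjoint (Finset.Ico (A q a - 1) (A q a + L q Ξ a - 1))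
          (Finset.Ico (A q b - 1) (A q b + L q Ξ b - 1)) := by
      intro a b hab
      rw [Finset.disjoint_left]
      intro j hj1 hj2
      simp only [Finset.mem_Ico] at hj1 hj2
      have h1 := AL_lt_A hq hqΞ hpow hab
      have h2 : 1 ≤ A q a := A_pos a
      have h3 : 1 ≤ A q b := A_pos b
      have h4 : 1 ≤ L q Ξ a := L_pos hq hqΞ a
      omega
    rcases hne.lt_or_gt with h | h
    · exact key _ _ h
    · exact (key _ _ h).symm

lemma sumL (hq : 3 ≤ q) (hqΞ : 1 ≤ q + Ξ) (m : ℕ) :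
    ((∑ t ∈ Finset.range m, L q Ξ t : ℕ) : ℤ) = q * (m:ℤ)^2 + (m:ℤ) * Ξ := by
  induction m with
  | zero => simp
  | succ m ih =>
    rw [Finset.sum_range_succ]
    push_cast [L_cast hq hqΞ m] at ih ⊢
    rw [ih]
    ring

lemma Bf_eq (hq : 3 ≤ q) (hqΞ : 1 ≤ q + Ξ)
    (hpow : (q : ℝ) + 1 + (Ξ : ℝ) ≤ (2 : ℝ) ^ ((q : ℝ) - 1))
    {s k : ℕ} (hk1 : A q s + L q Ξ s ≤ k) (hk2 : k < A q (s+1)) :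
    Bf q Ξ k = 2*s + 2 := by
  have hL0 : 1 ≤ L q Ξ 0 := L_pos hq hqΞ 0
  have hA0 : A q 0 = 1 := by simp [A]
  have hALmono : A q 0 + L q Ξ 0 ≤ A q s + L q Ξ s := AL_mono hq hqΞ hpow (by omega)
  have hk2' : 2 ≤ k := by omega
  have hset : (Finset.range (k-1)).filter (fun j => xseq q Ξ j ≠ xseq q Ξ (j+1))
      = ((Finset.range (s+1)).image (fun t => A q t + L q Ξ t - 2))
        ∪ ((Finset.Ico 1 (s+1)).image (fun t => A q t - 2)) := by
    ext j
    simp only [Finset.mem_filter, Finset.mem_range, Finset.mem_union, Finset.mem_image,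
      Finset.mem_Ico, xseq_eq hq hqΞ]
    constructor
    · rintro ⟨hjk, hne⟩
      by_cases h1 : (∃ t : ℕ, A q t ≤ j + 1 ∧ j + 1 < A q t + L q Ξ t)
        <;> by_cases h2 : (∃ t : ℕ, A q t ≤ (j+1) + 1 ∧ (j+1) + 1 < A q t + L q Ξ t)
      · simp [h1, h2] at hne
      · -- exit point
        obtain ⟨t, ht1, ht2⟩ := h1
        have hts : t ≤ s := by
          by_contra h
          have h3 : A q (s+1) ≤ A q t := A_mono (by omega)
          omega
        have hj2 : j + 2 = A q t + L q Ξ t := by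
          by_contra h
          exact h2 ⟨t, by omega, by omega⟩
        exact Or.inl ⟨t, by omega, by omega⟩
      · -- entry point
        obtain ⟨t, ht1, ht2⟩ := h2
        have hts : t ≤ s := by
          by_contra h
          have h3 : A q (s+1) ≤ A q t := A_mono (by omega)
          omega
        have hj2 : j + 2 = A q t := by
          by_contra h
          exact h1 ⟨t, by omega, by omega⟩
        have ht0 : 1 ≤ t := by
          rcases Nat.eq_zero_or_pos t with rfl | h
          · omega
          · exact h
        exact Or.inr ⟨t, ⟨ht0, by omega⟩, by omega⟩
      · simp [h1, h2] at hne
    · have hdisj : ∀ t t' : ℕ, t < t' → A q t + L q Ξ t < A q t' := fun _ _ h => AL_lt_A hq hqΞ hpow h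
      rintro (⟨t, hts, rfl⟩ | ⟨t, ⟨ht0, hts⟩, rfl⟩)
      · have hAt : 1 ≤ A q t := A_pos t
        have hLt : 1 ≤ L q Ξ t := L_pos hq hqΞ t
        have hALs : A q t + L q Ξ t ≤ A q s + L q Ξ s := AL_mono hq hqΞ hpow (by omega)
        have hP1 : (∃ u : ℕ, A q u ≤ (A q t + L q Ξ t - 2) + 1
            ∧ (A q t + L q Ξ t - 2) + 1 < A q u + L q Ξ u) := ⟨t, by omega, by omega⟩
        have hP2 : ¬ (∃ u : ℕ, A q u ≤ (A q t + L q Ξ t - 2) + 1 + 1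
            ∧ (A q t + L q Ξ t - 2) + 1 + 1 < A q u + L q Ξ u) := by
          rintro ⟨u, hu1, hu2⟩
          rcases lt_trichotomy u t with h | rfl | h
          · have := AL_mono hq hqΞ hpow (le_of_lt h) (t' := t)
            omega
          · omega
          · have := hdisj t u h
            have : 1 ≤ L q Ξ u := L_pos hq hqΞ u
            omega
        refine ⟨by omega, ?_⟩
        rw [if_pos hP1, if_neg hP2]
        norm_num
      · have hAt : 8 ≤ A q t := A_ge2 hq ht0
        have hLt : 1 ≤ L q Ξ t := L_pos hq hqΞ t
        have hAs : A q t ≤ A q s := A_mono (by omega)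
        have hP2 : (∃ u : ℕ, A q u ≤ (A q t - 2) + 1 + 1
            ∧ (A q t - 2) + 1 + 1 < A q u + L q Ξ u) := ⟨t, by omega, by omega⟩
        have hP1 : ¬ (∃ u : ℕ, A q u ≤ (A q t - 2) + 1
            ∧ (A q t - 2) + 1 < A q u + L q Ξ u) := by
          rintro ⟨u, hu1, hu2⟩
          rcases lt_trichotomy u t with h | rfl | h
          · have := hdisj u t h
            omega
          · omega
          · have h3 : A q t < A q u := A_strict hq hqΞ hpow h
            omega
        refine ⟨by omega, ?_⟩
        rw [if_neg hP1, if_pos hP2]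
        norm_num
  have hcard : ((Finset.range (k-1)).filter (fun j => xseq q Ξ j ≠ xseq q Ξ (j+1))).card
      = 2*s + 1 := by
    rw [hset, Finset.card_union_of_disjoint, Finset.card_image_of_injOn,
      Finset.card_image_of_injOn]
    · simp only [Finset.card_range, Nat.card_Ico]
      omega
    · -- injective on Ico 1 (s+1) : t ↦ A q t - 2
      intro a ha b hb hab
      simp only [Finset.coe_Ico, Set.mem_Ico] at ha hb
      simp only at hab
      by_contra hne
      rcases Nat.lt_or_ge a b with h | h
      · have h1 : A q a < A q b := A_strict hq hqΞ hpow h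
        have h2 : 8 ≤ A q a := A_ge2 hq ha.1
        omega
      · have h3 : b < a := by omega
        have h1 : A q b < A q a := A_strict hq hqΞ hpow h3
        have h2 : 8 ≤ A q b := A_ge2 hq hb.1
        omega
    · -- injective on range (s+1) : t ↦ A q t + L q Ξ t - 2
      intro a ha b hb hab
      simp only at hab
      by_contra hne
      have hA : ∀ u : ℕ, 2 ≤ A q u + L q Ξ u := fun u => by
        have := A_pos (q := q) u; have := L_pos hq hqΞ u; omega
      rcases Nat.lt_or_ge a b with h | h
      · have h1 := AL_lt_A hq hqΞ hpow h
        have := hA a; have := L_pos hq hqΞ b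
        omega
      · have h3 : b < a := by omega
        have h1 := AL_lt_A hq hqΞ hpow h3
        have := hA b; have := L_pos hq hqΞ a
        omega
    · -- disjoint
      rw [Finset.disjoint_left]
      rintro x hx1 hx2
      simp only [Finset.mem_image, Finset.mem_range, Finset.mem_Ico] at hx1 hx2
      obtain ⟨t, ht, rfl⟩ := hx1
      obtain ⟨t', ⟨ht0', hts'⟩, heq⟩ := hx2
      have hAt : 1 ≤ A q t := A_pos t
      have hLt : 1 ≤ L q Ξ t := L_pos hq hqΞ t
      have hAt' : 8 ≤ A q t' := A_ge2 hq ht0'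
      rcases lt_trichotomy t t' with h | rfl | h
      · have := AL_lt_A hq hqΞ hpow h
        omega
      · omega
      · have h1 : A q t' + L q Ξ t' < A q t := AL_lt_A hq hqΞ hpow h
        have := L_pos hq hqΞ t'
        omega
  rw [Bf, if_neg (by omega : ¬ k = 0), hcard]
  omega

end S12

open S12

theorem stmt12 (Ξ q : ℤ) (hq : 3 ≤ q) (hqΞ : 1 ≤ q + Ξ)
    (hpow : (q : ℝ) + 1 + (Ξ : ℝ) ≤ (2 : ℝ) ^ ((q : ℝ) - 1))
    (ξ : ℝ) (hξ1 : 1 ≤ (Ξ : ℝ) - 2 * ξ) (hξ2 : (Ξ : ℝ) - 2 * ξ ≤ 2) :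
    ∀ τ : ℝ, 1 ≤ τ →
      (∑' s : ℕ, ∑' k : ℕ,
          if (k : ℝ) ∈ Jset q Ξ (s : ℝ) then
            ENNReal.ofReal ((2 : ℝ) ^ (-τ * (Nf q Ξ k : ℝ) + τ * ξ * (Bf q Ξ k : ℝ)))
          else 0) ≤
        ENNReal.ofReal ((2 : ℝ) ^ (-τ) / (1 - (2 : ℝ) ^ (-τ))) := by
  
  intro τ hτ
  have hq0R : (0:ℝ) ≤ (q:ℝ) := by exact_mod_cast (by omega : (0:ℤ) ≤ q)
  set x : ℝ≥0∞ := ENNReal.ofReal ((2:ℝ) ^ (-τ)) with hxdef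
  have hr0 : (0:ℝ) < (2:ℝ) ^ (-τ) := Real.rpow_pos_of_pos (by norm_num) _
  have hr1 : (2:ℝ) ^ (-τ) ≤ 1/2 := by
    have : (2:ℝ) ^ (-τ) ≤ (2:ℝ) ^ (-(1:ℝ)) :=
      Real.rpow_le_rpow_of_exponent_le (by norm_num) (by linarith)
    calc (2:ℝ) ^ (-τ) ≤ (2:ℝ) ^ (-(1:ℝ)) := this
      _ = 1/2 := by
        rw [Real.rpow_neg_one]
        norm_num
  have hmain : ∀ s : ℕ, (∑' k : ℕ,
      if (k : ℝ) ∈ Jset q Ξ (s : ℝ) then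
        ENNReal.ofReal ((2 : ℝ) ^ (-τ * (Nf q Ξ k : ℝ) + τ * ξ * (Bf q Ξ k : ℝ)))
      else 0) ≤ x ^ (s+1) := by
    intro s
    set Q0 : ℝ := (q:ℝ) * ((s:ℝ)+1)^2 with hQ0
    have hQ0nn : 0 ≤ Q0 := by positivity
    set E : ℝ := -(τ * Q0) - τ*((s:ℝ)+1)*((Ξ:ℝ) - 2*ξ) with hE
    set C : ℝ≥0∞ := ENNReal.ofReal ((2:ℝ) ^ E) with hC
    have hterm : ∀ k : ℕ,
        (if (k : ℝ) ∈ Jset q Ξ (s : ℝ) then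
          ENNReal.ofReal ((2 : ℝ) ^ (-τ * (Nf q Ξ k : ℝ) + τ * ξ * (Bf q Ξ k : ℝ)))
        else 0) ≤ (if k < A q (s+1) then C else 0) := by
      intro k
      by_cases hk : (k : ℝ) ∈ Jset q Ξ (s : ℝ)
      · rw [if_pos hk]
        obtain ⟨h1, h2⟩ := (mem_Jset_iff hq hqΞ k s).mp hk
        rw [if_pos h2]
        have hN : (Nf q Ξ k : ℝ) = (q:ℝ)*((s:ℝ)+1)^2 + ((s:ℝ)+1)*(Ξ:ℝ) := by
          rw [Nf_eq hq hqΞ hpow h1 h2]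
          have := sumL hq hqΞ (s+1)
          have hcast : ((∑ t ∈ Finset.range (s+1), L q Ξ t : ℕ) : ℝ)
              = (q:ℝ)*((s+1:ℕ):ℝ)^2 + ((s+1:ℕ):ℝ)*(Ξ:ℝ) := by exact_mod_cast this
          rw [hcast]
          push_cast
          ring
        have hB : (Bf q Ξ k : ℝ) = 2*(s:ℝ)+2 := by
          rw [Bf_eq hq hqΞ hpow h1 h2]
          push_cast
          ring
        apply le_of_eq
        rw [hC]
        congr 1
        rw [hN, hB, hE, hQ0]
        ring
      · rw [if_neg hk]
        exact zero_le
    calc (∑' k : ℕ,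
        if (k : ℝ) ∈ Jset q Ξ (s : ℝ) then
          ENNReal.ofReal ((2 : ℝ) ^ (-τ * (Nf q Ξ k : ℝ) + τ * ξ * (Bf q Ξ k : ℝ)))
        else 0)
        ≤ ∑' k : ℕ, (if k < A q (s+1) then C else 0) := ENNReal.tsum_le_tsum hterm
      _ = ∑ k ∈ Finset.range (A q (s+1)), (if k < A q (s+1) then C else 0) := by
          refine tsum_eq_sum ?_
          intro k hk
          rw [if_neg]
          simp only [Finset.mem_range] at hk
          omega
      _ = (A q (s+1) : ℝ≥0∞) * C := by
          rw [Finset.sum_congr rfl (fun k hk => if_pos (Finset.mem_range.mp hk)),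
            Finset.sum_const, Finset.card_range, nsmul_eq_mul]
      _ ≤ x ^ (s+1) := by
          rw [← ENNReal.ofReal_natCast (A q (s+1)), ← ENNReal.ofReal_mul (by positivity),
            A_castR hq (s+1)]
          have hxpow : x ^ (s+1) = ENNReal.ofReal (((2:ℝ) ^ (-τ)) ^ (s+1)) :=
            (ENNReal.ofReal_pow hr0.le _).symm
          rw [hxpow]
          apply ENNReal.ofReal_le_ofReal
          have hQf : Qf q ((s+1 : ℕ) : ℝ) = Q0 := by
            rw [Qf, hQ0]
            push_cast
            ring
          rw [hQf, ← Real.rpow_add (by norm_num : (0:ℝ) < 2)]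
          have hrr : ((2:ℝ) ^ (-τ)) ^ (s+1) = (2:ℝ) ^ (-τ * ((s:ℝ)+1)) := by
            rw [← Real.rpow_natCast ((2:ℝ) ^ (-τ)) (s+1), ← Real.rpow_mul (by norm_num : (0:ℝ) ≤ 2)]
            push_cast
            ring_nf
          rw [hrr]
          apply Real.rpow_le_rpow_of_exponent_le (by norm_num)
          have hs1 : (1:ℝ) ≤ (s:ℝ) + 1 := by
            have : (0:ℝ) ≤ (s:ℝ) := Nat.cast_nonneg s
            linarith
          have h1 : Q0 - τ * Q0 ≤ 0 := by nlinarith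
          have hp : (0:ℝ) ≤ τ * ((s:ℝ)+1) := by nlinarith
          have h2 : τ * ((s:ℝ)+1) ≤ τ*((s:ℝ)+1)*((Ξ:ℝ) - 2*ξ) := by
            nlinarith [mul_le_mul_of_nonneg_left hξ1 hp]
          rw [hE]
          nlinarith
  calc (∑' s : ℕ, ∑' k : ℕ,
      if (k : ℝ) ∈ Jset q Ξ (s : ℝ) then
        ENNReal.ofReal ((2 : ℝ) ^ (-τ * (Nf q Ξ k : ℝ) + τ * ξ * (Bf q Ξ k : ℝ)))
      else 0)
      ≤ ∑' s : ℕ, x ^ (s+1) := ENNReal.tsum_le_tsum hmain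
    _ = x * ∑' s : ℕ, x ^ s := by
        rw [← ENNReal.tsum_mul_left]
        exact tsum_congr fun s => by rw [pow_succ, mul_comm]
    _ = x * (1 - x)⁻¹ := by rw [ENNReal.tsum_geometric]
    _ = ENNReal.ofReal ((2 : ℝ) ^ (-τ) / (1 - (2 : ℝ) ^ (-τ))) := by
        have h1x : (1 : ℝ≥0∞) - x = ENNReal.ofReal (1 - (2:ℝ) ^ (-τ)) := by
          rw [ENNReal.ofReal_sub _ hr0.le, ENNReal.ofReal_one]
        rw [h1x, ← ENNReal.ofReal_inv_of_pos (by linarith : (0:ℝ) < 1 - (2:ℝ) ^ (-τ)),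
          ← ENNReal.ofReal_mul hr0.le, div_eq_mul_inv]
end

section
/- For every real s ≥ 0 one has 2^(−Q(s+1)) ≤ λ(s) ≤ 2·2^(−Q(s+1)) ≤ 1/4; equivalently, 2^(Q(s+1)−1) ≤ |J_s| ≤ 2^(Q(s+1)). -/
open scoped Classical ENNReal
open Real Set Filter

lemma aux_two_rpow (x : ℝ) (hx : 0 ≤ x) : 1 + x / 2 ≤ (2 : ℝ) ^ x := by
  rw [Real.rpow_def_of_pos two_pos]
  have h1 := Real.add_one_le_exp (Real.log 2 * x)
  have h2 := Real.log_two_gt_d9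
  have h3 : (0.6931471803 : ℝ) * x ≤ Real.log 2 * x :=
    mul_le_mul_of_nonneg_right (le_of_lt h2) hx
  linarith

theorem stmt15 (Ξ q : ℤ) (hq : 3 ≤ q) (hqΞ : 1 ≤ q + Ξ)
    (hpow : (q : ℝ) + 1 + (Ξ : ℝ) ≤ (2 : ℝ) ^ ((q : ℝ) - 1)) :
    ∀ s : ℝ, 0 ≤ s →
      (2 : ℝ) ^ (-Qf q (s + 1)) ≤ lamf q Ξ s ∧
      lamf q Ξ s ≤ 2 * (2 : ℝ) ^ (-Qf q (s + 1)) ∧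
      2 * (2 : ℝ) ^ (-Qf q (s + 1)) ≤ 1 / 4 ∧
      (2 : ℝ) ^ (Qf q (s + 1) - 1) ≤ Jlen q Ξ s ∧
      Jlen q Ξ s ≤ (2 : ℝ) ^ (Qf q (s + 1)) := by
  intro s hs
  have hq' : (3 : ℝ) ≤ (q : ℝ) := by exact_mod_cast hq
  have hΞ' : (1 : ℝ) ≤ (q : ℝ) + (Ξ : ℝ) := by exact_mod_cast hqΞ
  set Q0 := Qf q s with hQ0def
  set Q1 := Qf q (s + 1) with hQ1def
  have hD : Q1 - Q0 = (q : ℝ) * (2 * s + 1) := by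
    simp only [hQ0def, hQ1def, Qf]; ring
  have hQ0nn : 0 ≤ Q0 := by
    rw [hQ0def]; unfold Qf; positivity
  have hQ13 : 3 ≤ Q1 := by
    rw [hQ1def]; unfold Qf; nlinarith
  have hDge : (q : ℝ) ≤ Q1 - Q0 := by nlinarith
  -- key inequality: Q1 - Q0 + 1 + Ξ ≤ 2^(Q1-Q0-1)
  have hx : 0 ≤ Q1 - Q0 - (q : ℝ) := by linarith
  have h2x := aux_two_rpow (Q1 - Q0 - (q : ℝ)) hx
  have hsplit : (2 : ℝ) ^ (Q1 - Q0 - 1) =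
      (2 : ℝ) ^ ((q : ℝ) - 1) * (2 : ℝ) ^ (Q1 - Q0 - (q : ℝ)) := by
    rw [← Real.rpow_add two_pos]; ring_nf
  have hpos2x : (0 : ℝ) < (2 : ℝ) ^ (Q1 - Q0 - (q : ℝ)) := Real.rpow_pos_of_pos two_pos _
  have hkey : Q1 - Q0 + 1 + (Ξ : ℝ) ≤ (2 : ℝ) ^ (Q1 - Q0 - 1) := by
    rw [hsplit]
    have h1 : ((q : ℝ) + 1 + (Ξ : ℝ)) * (2 : ℝ) ^ (Q1 - Q0 - (q : ℝ)) ≤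
        (2 : ℝ) ^ ((q : ℝ) - 1) * (2 : ℝ) ^ (Q1 - Q0 - (q : ℝ)) :=
      mul_le_mul_of_nonneg_right hpow (le_of_lt hpos2x)
    nlinarith
  have hA1 : (1 : ℝ) ≤ (2 : ℝ) ^ Q0 := by
    calc (1 : ℝ) = (2 : ℝ) ^ (0 : ℝ) := (Real.rpow_zero 2).symm
    _ ≤ (2 : ℝ) ^ Q0 := Real.rpow_le_rpow_of_exponent_le one_le_two hQ0nn
  have hJ : Jlen q Ξ s = (2 : ℝ) ^ Q1 - (2 : ℝ) ^ Q0 - (Q1 - Q0 + (Ξ : ℝ)) := rfl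
  have hL : lamf q Ξ s = 1 / Jlen q Ξ s := rfl
  have hC : (1 : ℝ) ≤ Q1 - Q0 + (Ξ : ℝ) := by linarith
  have hsplit2 : (2 : ℝ) ^ (Q1 - 1) = (2 : ℝ) ^ Q0 * (2 : ℝ) ^ (Q1 - Q0 - 1) := by
    rw [← Real.rpow_add two_pos]; ring_nf
  have hhalf : (2 : ℝ) ^ (Q1 - 1) * (2 : ℝ) ^ (1 : ℝ) = (2 : ℝ) ^ Q1 := by
    rw [← Real.rpow_add two_pos]; ring_nf
  rw [Real.rpow_one] at hhalf
  have hp0 : (0 : ℝ) < (2 : ℝ) ^ Q0 := Real.rpow_pos_of_pos two_pos _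
  have hp1 : (0 : ℝ) < (2 : ℝ) ^ (Q1 - 1) := Real.rpow_pos_of_pos two_pos _
  -- lower bound on Jlen
  have hJlo : (2 : ℝ) ^ (Q1 - 1) ≤ Jlen q Ξ s := by
    rw [hJ]
    have hmul : ((2 : ℝ) ^ Q0) * (Q1 - Q0 + (Ξ : ℝ) + 1) ≤
        (2 : ℝ) ^ Q0 * (2 : ℝ) ^ (Q1 - Q0 - 1) :=
      mul_le_mul_of_nonneg_left (by linarith) (le_of_lt hp0)
    rw [← hsplit2] at hmul
    nlinarith [mul_nonneg (sub_nonneg.mpr hA1) (by linarith : (0 : ℝ) ≤ Q1 - Q0 + (Ξ : ℝ))]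
  -- upper bound on Jlen
  have hJhi : Jlen q Ξ s ≤ (2 : ℝ) ^ Q1 := by
    rw [hJ]; linarith
  have hJpos : 0 < Jlen q Ξ s := lt_of_lt_of_le hp1 hJlo
  -- 2^(-Q1) = 1 / 2^Q1
  have hneg : (2 : ℝ) ^ (-Q1) = 1 / (2 : ℝ) ^ Q1 := by
    rw [Real.rpow_neg (by norm_num), one_div]
  have hneg2 : 2 * (2 : ℝ) ^ (-Q1) = 1 / (2 : ℝ) ^ (Q1 - 1) := by
    rw [eq_div_iff hp1.ne']
    have e1 : (2 : ℝ) ^ (-Q1) * (2 : ℝ) ^ (Q1 - 1) = 1 / 2 := by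
      rw [← Real.rpow_add two_pos, show -Q1 + (Q1 - 1) = (-1 : ℝ) by ring,
        Real.rpow_neg_one]
      norm_num
    linarith
  refine ⟨?_, ?_, ?_, hJlo, hJhi⟩
  · rw [hL, hneg]
    exact one_div_le_one_div_of_le hJpos hJhi
  · rw [hL, hneg2]
    exact one_div_le_one_div_of_le hp1 hJlo
  · have h8 : (2 : ℝ) ^ (-(3 : ℝ)) = 1 / 8 := by
      rw [Real.rpow_neg (by norm_num), show (3 : ℝ) = ((3 : ℕ) : ℝ) by norm_num,
        Real.rpow_natCast]
      norm_num
    have h2 : (2 : ℝ) ^ (-Q1) ≤ (2 : ℝ) ^ (-(3 : ℝ)) :=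
      Real.rpow_le_rpow_of_exponent_le one_le_two (by linarith)
    rw [h8] at h2
    linarith
end

section
/- The ratio N(k)/k converges to 0 as k → ∞. -/
open scoped Classical ENNReal
open Real Set Filter

-- auxiliary lemmas
lemma Qf_nat (q : ℤ) (hq : 0 ≤ q) (s : ℕ) :
    Qf q (s : ℝ) = ((q.toNat * s ^ 2 : ℕ) : ℝ) := by
  have h : ((q.toNat : ℝ)) = (q : ℝ) := by exact_mod_cast Int.toNat_of_nonneg hq
  unfold Qf; push_cast [h]; ring

lemma Qf_len (q Ξ : ℤ) (s : ℕ) :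
    Qf q ((s : ℝ) + 1) - Qf q (s : ℝ) + (Ξ : ℝ) = ((q * (2 * s + 1) + Ξ : ℤ) : ℝ) := by
  unfold Qf; push_cast; ring

lemma count_in_Iset (q Ξ : ℤ) (hq : 3 ≤ q) (hqΞ : 1 ≤ q + Ξ) (k s : ℕ) :
    ((Finset.range k).filter (fun j : ℕ => ((j : ℝ) + 1) ∈ Iset q Ξ (s : ℝ))).card
      ≤ (q * (2 * s + 1) + Ξ).toNat := by
  have hq0 : (0:ℤ) ≤ q := by omega
  set A : ℕ := 2 ^ (q.toNat * s ^ 2) with hA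
  have hA1 : 1 ≤ A := Nat.one_le_two_pow
  have hApow : (2 : ℝ) ^ (Qf q (s : ℝ)) = (A : ℝ) := by
    rw [Qf_nat q hq0 s, Real.rpow_natCast]
    push_cast [hA]
    ring
  set L : ℕ := (q * (2 * s + 1) + Ξ).toNat with hL
  have hLpos : (1:ℤ) ≤ q * (2 * s + 1) + Ξ := by nlinarith [Int.ofNat_nonneg s]
  have hLcast : ((L : ℤ)) = q * (2 * s + 1) + Ξ := Int.toNat_of_nonneg (by omega)
  have hsub : ((Finset.range k).filter (fun j : ℕ => ((j : ℝ) + 1) ∈ Iset q Ξ (s : ℝ)))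
      ⊆ Finset.Ico (A - 1) (A - 1 + L) := by
    intro j hj
    simp only [Finset.mem_filter, Finset.mem_range] at hj
    obtain ⟨hjk, hmem⟩ := hj
    rw [Iset, Set.mem_Ico] at hmem
    obtain ⟨h1, h2⟩ := hmem
    rw [hApow] at h1
    have h2' : ((j : ℝ) + 1) < (A : ℝ) + ((q * (2 * s + 1) + Ξ : ℤ) : ℝ) := by
      have := Qf_len q Ξ s
      calc ((j : ℝ) + 1) < (2:ℝ) ^ (Qf q (s:ℝ)) + Qf q ((s:ℝ) + 1) - Qf q (s:ℝ) + (Ξ:ℝ) := h2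
        _ = (A : ℝ) + (Qf q ((s:ℝ) + 1) - Qf q (s:ℝ) + (Ξ:ℝ)) := by rw [hApow]; ring
        _ = (A : ℝ) + ((q * (2 * s + 1) + Ξ : ℤ) : ℝ) := by rw [this]
    have hlow : A ≤ j + 1 := by exact_mod_cast h1
    have hhigh : (j : ℤ) + 1 < (A : ℤ) + L := by
      rw [hLcast]
      exact_mod_cast h2'
    simp only [Finset.mem_Ico]
    omega
  calc _ ≤ (Finset.Ico (A - 1) (A - 1 + L)).card := Finset.card_le_card hsub
    _ = L := by rw [Nat.card_Ico]; omega

lemma Nf_le (q Ξ : ℤ) (hq : 3 ≤ q) (hqΞ : 1 ≤ q + Ξ) (k : ℕ) :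
    Nf q Ξ k ≤ 2 * (q.toNat + Ξ.toNat) * (Nat.log 2 k + 1) ^ 2 := by
  rcases Nat.eq_zero_or_pos k with rfl | hk
  · simp [Nf]
  have hk0 : k ≠ 0 := hk.ne'
  set S : ℕ := Nat.log 2 k with hS
  set C : ℕ := q.toNat + Ξ.toNat with hC
  have hq0 : (0:ℤ) ≤ q := by omega
  have hsub : ((Finset.range k).filter (fun j => xseq q Ξ j = 0))
      ⊆ (Finset.range (S + 1)).biUnion
        (fun s => (Finset.range k).filter (fun j : ℕ => ((j : ℝ) + 1) ∈ Iset q Ξ (s : ℝ))) := by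
    intro j hj
    simp only [Finset.mem_filter, Finset.mem_range] at hj
    obtain ⟨hjk, hx⟩ := hj
    rw [xseq] at hx
    split_ifs at hx with h
    obtain ⟨s, hs⟩ := h
    have h1 : (2 : ℝ) ^ (Qf q (s : ℝ)) ≤ (j : ℝ) + 1 := hs.1
    have hApow : (2 : ℝ) ^ (Qf q (s : ℝ)) = ((2 ^ (q.toNat * s ^ 2) : ℕ) : ℝ) := by
      rw [Qf_nat q hq0 s, Real.rpow_natCast]; push_cast; ring
    rw [hApow] at h1
    have h1' : 2 ^ (q.toNat * s ^ 2) ≤ j + 1 := by exact_mod_cast h1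
    have hse : s ≤ q.toNat * s ^ 2 := by
      have h3 : 1 ≤ q.toNat := by omega
      calc s ≤ s ^ 2 := Nat.le_self_pow two_ne_zero s
        _ ≤ q.toNat * s ^ 2 := Nat.le_mul_of_pos_left _ h3
    have h2 : 2 ^ s ≤ k := le_trans (le_trans (Nat.pow_le_pow_right (by norm_num) hse) h1') hjk
    have hsS : s ≤ S := (Nat.le_log_iff_pow_le one_lt_two hk0).mpr h2
    simp only [Finset.mem_biUnion, Finset.mem_range, Finset.mem_filter]
    exact ⟨s, by omega, hjk, hs⟩
  calc Nf q Ξ k ≤ ∑ s ∈ Finset.range (S + 1),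
        ((Finset.range k).filter (fun j : ℕ => ((j : ℝ) + 1) ∈ Iset q Ξ (s : ℝ))).card :=
        le_trans (Finset.card_le_card hsub) Finset.card_biUnion_le
    _ ≤ ∑ s ∈ Finset.range (S + 1), C * (2 * S + 1) := by
        apply Finset.sum_le_sum
        intro s hs
        simp only [Finset.mem_range] at hs
        refine le_trans (count_in_Iset q Ξ hq hqΞ k s) ?_
        rw [Int.toNat_le]
        push_cast [hC]
        have hqt : ((q.toNat : ℤ)) = q := Int.toNat_of_nonneg hq0
        have hΞt : Ξ ≤ (Ξ.toNat : ℤ) := Int.self_le_toNat Ξ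
        have hs' : (s : ℤ) ≤ S := by exact_mod_cast Nat.le_of_lt_succ hs
        nlinarith [Int.ofNat_nonneg Ξ.toNat, Int.ofNat_nonneg s]
    _ = (S + 1) * (C * (2 * S + 1)) := by rw [Finset.sum_const, Finset.card_range]; ring
    _ ≤ 2 * C * (S + 1) ^ 2 := by nlinarith

lemma tendsto_aux : Tendsto (fun x : ℝ => (Real.logb 2 x + 1) ^ 2 / x) atTop (nhds 0) := by
  have hc : Real.log 2 ≠ 0 := ne_of_gt (Real.log_pos one_lt_two)
  have h2 := Real.tendsto_pow_log_div_mul_add_atTop 1 0 2 one_ne_zero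
  have h1 := Real.tendsto_pow_log_div_mul_add_atTop 1 0 1 one_ne_zero
  have h0 := Real.tendsto_pow_log_div_mul_add_atTop 1 0 0 one_ne_zero
  have H := (((h2.const_mul ((1 / Real.log 2) ^ 2)).add
      (h1.const_mul (2 / Real.log 2))).add h0)
  simp only [mul_zero, add_zero] at H
  refine H.congr fun x => ?_
  simp only [one_mul, add_zero, pow_one, pow_zero]
  rcases eq_or_ne x 0 with rfl | hx
  · simp
  · rw [Real.logb]
    field_simp
    ring

theorem stmt19 (Ξ q : ℤ) (hq : 3 ≤ q) (hqΞ : 1 ≤ q + Ξ)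
    (hpow : (q : ℝ) + 1 + (Ξ : ℝ) ≤ (2 : ℝ) ^ ((q : ℝ) - 1)) :
    Filter.Tendsto (fun k : ℕ => (Nf q Ξ k : ℝ) / (k : ℝ)) Filter.atTop (nhds 0) := by
  set C : ℕ := q.toNat + Ξ.toNat with hC
  have hT : Tendsto (fun x : ℝ => (2 * C : ℝ) * ((Real.logb 2 x + 1) ^ 2 / x))
      atTop (nhds 0) := by
    simpa using tendsto_aux.const_mul ((2 * C : ℝ))
  have hTn := hT.comp (tendsto_natCast_atTop_atTop (R := ℝ))
  apply squeeze_zero' ?_ ?_ hTn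
  · filter_upwards [eventually_ge_atTop 1] with k hk
    positivity
  · filter_upwards [eventually_ge_atTop 1] with k hk
    have hk0 : (0:ℝ) < k := by exact_mod_cast hk
    have hN := Nf_le q Ξ hq hqΞ k
    have hlogb : ((Nat.log 2 k : ℝ)) ≤ Real.logb 2 k := by
      rw [Real.le_logb_iff_rpow_le one_lt_two hk0]
      rw [Real.rpow_natCast]
      exact_mod_cast Nat.pow_log_le_self 2 (by omega)
    have hlb0 : (0:ℝ) ≤ (Nat.log 2 k : ℝ) + 1 := by positivity
    calc (Nf q Ξ k : ℝ) / k ≤ (2 * C * ((Nat.log 2 k : ℝ) + 1) ^ 2) / k := by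
          gcongr
          exact_mod_cast hN
      _ ≤ (2 * C * (Real.logb 2 k + 1) ^ 2) / k := by
          gcongr
      _ = (2 * C : ℝ) * ((Real.logb 2 (k:ℝ) + 1) ^ 2 / (k:ℝ)) := by ring
end
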